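/- arXiv:2007.15768 — 2 statements merged into one kernel-verified Lean document; each statement's English description precedes it below -/
import Mathlib

section
/- Let Z be a special symbol of defect 1 and size (m+1,m) and Z' a special symbol of defect 0 and size (m',m') with m' = m or m' = m+1, and suppose D_{Z,Z'} ≠ ∅. Let Ψ_0 and Ψ'_0 be the cores in Z_I and Z'_I of D_{Z,Z'}. Then: (i) if {c_k, d_l} is a consecutive pair contained in Ψ'_0, then for all Λ ∈ S̄_Z and Λ' ∈ S̄_{Z'}, (Λ,Λ') ∈ B̄⁺_{Z,Z'} if and only if (Λ, Λ' + Λ_{{c_k,d_l}}) ∈ B̄⁺_{Z,Z'}; (ii) if {a_k, b_l} is a consecutive pair contained in Ψ_0, then (Λ,Λ') ∈ B̄⁺_{Z,Z'} if and only if (Λ + Λ_{{a_k,b_l}}, Λ') ∈ B̄⁺_{Z,Z'}. -/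
open scoped symmDiff

/-- A symbol: a pair of finsets of naturals (its two rows, each read in
strictly decreasing order). -/
abbrev Symb :=  Finset ℕ × Finset ℕ

/-- The strictly decreasing enumeration of a finset of naturals. -/
def rowList (s : Finset ℕ) : List ℕ := (s.sort (· ≤ ·)).reverse

/-- The `i`-th entry (0-based) of the strictly decreasing enumeration of `s`. -/
def ent (s : Finset ℕ) (i : ℕ) : Option ℕ := (rowList s)[i]?

/-- Impose a relation on two optional entries whenever both exist. -/
def oRel (r : ℕ → ℕ → Prop) : Option ℕ → Option ℕ → Prop
  | some x, some y => r x y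
  | _, _ => True

/-- `Z` is a special symbol of defect 1 and size `(m+1, m)`. -/
def IsSpecial1 (Z : Symb) (m : ℕ) : Prop :=
  Z.1.card = m + 1 ∧ Z.2.card = m ∧
  (∀ i, oRel (· ≥ ·) (ent Z.1 i) (ent Z.2 i)) ∧
  (∀ i, oRel (· ≥ ·) (ent Z.2 i) (ent Z.1 (i + 1)))

/-- `Z'` is a special symbol of defect 0 and size `(m', m')`. -/
def IsSpecial0 (Z : Symb) (m' : ℕ) : Prop :=
  Z.1.card = m' ∧ Z.2.card = m' ∧
  (∀ i, oRel (· ≥ ·) (ent Z.1 i) (ent Z.2 i)) ∧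
  (∀ i, oRel (· ≥ ·) (ent Z.2 i) (ent Z.1 (i + 1)))

/-- `Z_I`: the entries of `Z` lying in exactly one row (row remembered). -/
def ZI (Z : Symb) : Symb := (Z.1 \ Z.2, Z.2 \ Z.1)

/-- `M` is a subset of `Z_I`. -/
def SubZI (M Z : Symb) : Prop := M.1 ⊆ Z.1 \ Z.2 ∧ M.2 ⊆ Z.2 \ Z.1

/-- `Z` is regular: no degenerate entries. -/
def Regular (Z : Symb) : Prop := Disjoint Z.1 Z.2

/-- `Λ_M`: exchange the rows of the entries of `M`. -/
def lam (Z M : Symb) : Symb := ((Z.1 \ M.1) ∪ M.2, (Z.2 \ M.2) ∪ M.1)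

/-- `S̄_Z = {Λ_M : M ⊆ Z_I}`. -/
def Sbar (Z : Symb) : Set Symb := {Λ | ∃ M, SubZI M Z ∧ Λ = lam Z M}

/-- Size and inequality conditions of `B̄⁺_{Z,Z'}` in the case `m' = m`. -/
def Bm (Λ Λ' : Symb) : Prop :=
  Λ'.1.card = Λ.2.card ∧ Λ'.2.card + 1 = Λ.1.card ∧
  (∀ i, oRel (· > ·) (ent Λ.1 i) (ent Λ'.2 i)) ∧
  (∀ i, oRel (· ≥ ·) (ent Λ'.2 i) (ent Λ.1 (i + 1))) ∧
  (∀ i, oRel (· > ·) (ent Λ.2 i) (ent Λ'.1 (i + 1))) ∧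
  (∀ i, oRel (· ≥ ·) (ent Λ'.1 i) (ent Λ.2 i))

/-- Size and inequality conditions of `B̄⁺_{Z,Z'}` in the case `m' = m + 1`. -/
def Bm1 (Λ Λ' : Symb) : Prop :=
  Λ'.1.card = Λ.2.card + 1 ∧ Λ'.2.card = Λ.1.card ∧
  (∀ i, oRel (· ≥ ·) (ent Λ.1 i) (ent Λ'.2 i)) ∧
  (∀ i, oRel (· > ·) (ent Λ'.2 i) (ent Λ.1 (i + 1))) ∧
  (∀ i, oRel (· ≥ ·) (ent Λ.2 i) (ent Λ'.1 (i + 1))) ∧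
  (∀ i, oRel (· > ·) (ent Λ'.1 i) (ent Λ.2 i))

/-- The relation `B̄⁺_{Z,Z'}`. -/
def BbarPlus (Z Z' : Symb) (m m' : ℕ) (Λ Λ' : Symb) : Prop :=
  Λ ∈ Sbar Z ∧ Λ' ∈ Sbar Z' ∧
  ((m' = m ∧ Bm Λ Λ') ∨ (m' = m + 1 ∧ Bm1 Λ Λ'))

/-- The relation `D_{Z,Z'}`. -/
def DRel (Z Z' : Symb) (m m' : ℕ) (A A' : Symb) : Prop :=
  BbarPlus Z Z' m m' A A' ∧
  A.1.card = m + 1 ∧ A.2.card = m ∧ A'.1.card = m' ∧ A'.2.card = m'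

/-- `{c, d}` is a consecutive pair in `Z_I`. -/
def ConsecPair (Z : Symb) (c d : ℕ) : Prop :=
  c ∈ Z.1 \ Z.2 ∧ d ∈ Z.2 \ Z.1 ∧
  ∀ x ∈ (Z.1 \ Z.2) ∪ (Z.2 \ Z.1), ¬(min c d < x ∧ x < max c d)




def cnt (s : Finset ℕ) (v : ℕ) : ℕ := (s.filter (fun x => v ≤ x)).card

lemma rowList_sorted (s : Finset ℕ) : (rowList s).Pairwise (· > ·) := by
  rw [rowList, List.pairwise_reverse]
  exact (Finset.sortedLT_sort s).pairwise

lemma rowList_length (s : Finset ℕ) : (rowList s).length = s.card := by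
  simp [rowList]

lemma cnt_eq_filter_length (s : Finset ℕ) (v : ℕ) :
    cnt s v = ((rowList s).filter (fun z => decide (v ≤ z))).length := by
  have h1 : List.Perm (rowList s) s.toList :=
    (List.reverse_perm _).trans (Finset.sort_perm_toList s _)
  rw [(h1.filter (fun z => decide (v ≤ z))).length_eq]
  have h3 : ((s.toList.filter (fun z => decide (v ≤ z)) : List ℕ) : Multiset ℕ)
      = (s.filter (fun x => v ≤ x)).val := by
    rw [← Multiset.filter_coe]
    rw [Finset.toList, Multiset.coe_toList]
    rfl
  have h4 := congrArg Multiset.card h3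
  rw [Multiset.coe_card] at h4
  rw [h4, cnt, Finset.card]

-- key list lemmas
lemma Lk1 {l : List ℕ} (hl : l.Pairwise (· > ·)) :
    ∀ {i x v}, l[i]? = some x → v ≤ x → i < (l.filter (fun z => decide (v ≤ z))).length := by
  induction l with
  | nil => intro i x v h _; simp at h
  | cons a t ih =>
    intro i x v h hv
    rcases List.pairwise_cons.mp hl with ⟨ha, ht⟩
    cases i with
    | zero =>
      simp at h; subst h
      simp [List.filter_cons, hv]
    | succ i =>
      simp only [List.getElem?_cons_succ] at h
      have hx : x ∈ t := List.mem_of_getElem? h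
      have hva : v ≤ a := le_of_lt (lt_of_le_of_lt hv (ha x hx))
      have hlen : ((a :: t).filter (fun z => decide (v ≤ z))).length
          = (t.filter (fun z => decide (v ≤ z))).length + 1 := by
        simp [List.filter_cons, hva]
      have := ih ht h hv
      omega

lemma Lk2 {l : List ℕ} (hl : l.Pairwise (· > ·)) :
    ∀ {i v}, i < (l.filter (fun z => decide (v ≤ z))).length → ∃ x, l[i]? = some x ∧ v ≤ x := by
  induction l with
  | nil => intro i v h; simp at h
  | cons a t ih =>
    intro i v h
    rcases List.pairwise_cons.mp hl with ⟨ha, ht⟩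
    by_cases hv : v ≤ a
    · have hlen : ((a :: t).filter (fun z => decide (v ≤ z))).length
          = (t.filter (fun z => decide (v ≤ z))).length + 1 := by
        simp [List.filter_cons, hv]
      rw [hlen] at h
      cases i with
      | zero => exact ⟨a, by simp, hv⟩
      | succ i =>
        obtain ⟨x, hx1, hx2⟩ := ih (i := i) (v := v) ht (by omega)
        exact ⟨x, by simpa using hx1, hx2⟩
    · exfalso
      have hnil : t.filter (fun z => decide (v ≤ z)) = [] := by
        apply List.filter_eq_nil_iff.mpr
        intro z hz
        simp only [decide_eq_true_eq]
        have := ha z hz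
        omega
      simp [List.filter_cons, hv, hnil] at h
-- finset-level bridge lemmas
lemma cnt_lt_of_ent {s : Finset ℕ} {i x v : ℕ} (h : ent s i = some x) (hv : v ≤ x) :
    i < cnt s v := by
  rw [cnt_eq_filter_length]
  exact Lk1 (rowList_sorted s) h hv

lemma ent_ge_of_cnt {t : Finset ℕ} {i v : ℕ} (h : i < cnt t v) :
    ∃ y, ent t i = some y ∧ v ≤ y := by
  rw [cnt_eq_filter_length] at h
  exact Lk2 (rowList_sorted t) h

lemma ent_exists {s : Finset ℕ} {i : ℕ} (h : i < s.card) : ∃ x, ent s i = some x := by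
  rw [← rowList_length] at h
  exact ⟨(rowList s)[i], List.getElem?_eq_getElem h⟩

lemma cnt_le_card (s : Finset ℕ) (v : ℕ) : cnt s v ≤ s.card := Finset.card_filter_le _ _


-- E lemmas
lemma E1 {s t : Finset ℕ} (hc : t.card ≤ s.card) :
    (∀ i, oRel (· > ·) (ent s i) (ent t i)) ↔ ∀ v, cnt t v ≤ cnt s (v+1) := by
  constructor
  · intro h v
    rcases Nat.eq_zero_or_pos (cnt t v) with h0 | h0
    · omega
    obtain ⟨y, hy, hvy⟩ := ent_ge_of_cnt (t := t) (i := cnt t v - 1) (v := v) (by omega)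
    obtain ⟨z, hz⟩ := ent_exists (s := s) (i := cnt t v - 1)
      (lt_of_lt_of_le (lt_of_lt_of_le (by omega) (cnt_le_card t v)) hc)
    have hr := h (cnt t v - 1)
    rw [hy, hz] at hr
    have : v + 1 ≤ z := by simp only [oRel] at hr; omega
    have := cnt_lt_of_ent hz this
    omega
  · intro h i
    cases hz : ent s i with
    | none => simp [oRel]
    | some z =>
      cases hy : ent t i with
      | none => simp [oRel]
      | some y =>
        simp only [oRel, gt_iff_lt]
        have h1 : i < cnt t y := cnt_lt_of_ent hy le_rfl
        have h2 : i < cnt s (y+1) := lt_of_lt_of_le h1 (h y)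
        obtain ⟨z', hz', hz'2⟩ := ent_ge_of_cnt h2
        rw [hz] at hz'; injection hz' with e; omega

lemma E3 {s t : Finset ℕ} (hc : t.card ≤ s.card) :
    (∀ i, oRel (· ≥ ·) (ent s i) (ent t i)) ↔ ∀ v, cnt t v ≤ cnt s v := by
  constructor
  · intro h v
    rcases Nat.eq_zero_or_pos (cnt t v) with h0 | h0
    · omega
    obtain ⟨y, hy, hvy⟩ := ent_ge_of_cnt (t := t) (i := cnt t v - 1) (v := v) (by omega)
    obtain ⟨z, hz⟩ := ent_exists (s := s) (i := cnt t v - 1)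
      (lt_of_lt_of_le (lt_of_lt_of_le (by omega) (cnt_le_card t v)) hc)
    have hr := h (cnt t v - 1)
    rw [hy, hz] at hr
    have : v ≤ z := by simp only [oRel] at hr; omega
    have := cnt_lt_of_ent hz this
    omega
  · intro h i
    cases hz : ent s i with
    | none => simp [oRel]
    | some z =>
      cases hy : ent t i with
      | none => simp [oRel]
      | some y =>
        simp only [oRel, ge_iff_le]
        have h1 : i < cnt t y := cnt_lt_of_ent hy le_rfl
        have h2 : i < cnt s y := lt_of_lt_of_le h1 (h y)
        obtain ⟨z', hz', hz'2⟩ := ent_ge_of_cnt h2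
        rw [hz] at hz'; injection hz' with e; omega

lemma E2 {s t : Finset ℕ} (hc : s.card ≤ t.card + 1) :
    (∀ i, oRel (· ≥ ·) (ent t i) (ent s (i+1))) ↔ ∀ v, cnt s v ≤ cnt t v + 1 := by
  constructor
  · intro h v
    rcases le_or_gt (cnt s v) 1 with h0 | h0
    · omega
    obtain ⟨x, hx, hvx⟩ := ent_ge_of_cnt (t := s) (i := cnt s v - 1) (v := v) (by omega)
    obtain ⟨y, hy⟩ := ent_exists (s := t) (i := cnt s v - 2)
      (by have := cnt_le_card s v; omega)
    have hr := h (cnt s v - 2)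
    have he : cnt s v - 2 + 1 = cnt s v - 1 := by omega
    rw [he, hx, hy] at hr
    have : v ≤ y := by simp only [oRel] at hr; omega
    have := cnt_lt_of_ent hy this
    omega
  · intro h i
    cases hy : ent t i with
    | none => simp [oRel]
    | some y =>
      cases hx : ent s (i+1) with
      | none => simp [oRel]
      | some x =>
        simp only [oRel, ge_iff_le]
        have h1 : i + 1 < cnt s x := cnt_lt_of_ent hx le_rfl
        have h2 : i < cnt t x := by have := h x; omega
        obtain ⟨y', hy', hy'2⟩ := ent_ge_of_cnt h2
        rw [hy] at hy'; injection hy' with e; omega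

lemma E4 {s t : Finset ℕ} (hc : s.card ≤ t.card + 1) :
    (∀ i, oRel (· > ·) (ent t i) (ent s (i+1))) ↔ ∀ v, cnt s v ≤ cnt t (v+1) + 1 := by
  constructor
  · intro h v
    rcases le_or_gt (cnt s v) 1 with h0 | h0
    · omega
    obtain ⟨x, hx, hvx⟩ := ent_ge_of_cnt (t := s) (i := cnt s v - 1) (v := v) (by omega)
    obtain ⟨y, hy⟩ := ent_exists (s := t) (i := cnt s v - 2)
      (by have := cnt_le_card s v; omega)
    have hr := h (cnt s v - 2)
    have he : cnt s v - 2 + 1 = cnt s v - 1 := by omega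
    rw [he, hx, hy] at hr
    have : v + 1 ≤ y := by simp only [oRel] at hr; omega
    have := cnt_lt_of_ent hy this
    omega
  · intro h i
    cases hy : ent t i with
    | none => simp [oRel]
    | some y =>
      cases hx : ent s (i+1) with
      | none => simp [oRel]
      | some x =>
        simp only [oRel, gt_iff_lt]
        have h1 : i + 1 < cnt s x := cnt_lt_of_ent hx le_rfl
        have h2 : i < cnt t (x+1) := by have := h x; omega
        obtain ⟨y', hy', hy'2⟩ := ent_ge_of_cnt h2
        rw [hy] at hy'; injection hy' with e; omega
def zcnt (s : Finset ℕ) (v : ℕ) : ℤ := (cnt s v : ℤ)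
def ind (s : Finset ℕ) (v : ℕ) : ℤ := if v ∈ s then 1 else 0
def chi (a : ℕ) (v : ℕ) : ℤ := if v ≤ a then 1 else 0

lemma ind01 (s : Finset ℕ) (v : ℕ) : ind s v = 0 ∨ ind s v = 1 := by
  unfold ind; split <;> simp

lemma ind_of_mem {s : Finset ℕ} {v : ℕ} (h : v ∈ s) : ind s v = 1 := by simp [ind, h]
lemma ind_of_not_mem {s : Finset ℕ} {v : ℕ} (h : v ∉ s) : ind s v = 0 := by simp [ind, h]
lemma not_mem_of_ind {s : Finset ℕ} {v : ℕ} (h : ind s v = 0) : v ∉ s := by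
  intro hm; rw [ind_of_mem hm] at h; exact one_ne_zero h

lemma cnt_zero (s : Finset ℕ) : cnt s 0 = s.card := by
  unfold cnt
  congr 1
  apply Finset.filter_true_of_mem
  intro x _; exact Nat.zero_le x

lemma zcnt_zero (s : Finset ℕ) : zcnt s 0 = (s.card : ℤ) := by
  rw [zcnt, cnt_zero]

lemma cnt_step (s : Finset ℕ) (v : ℕ) : zcnt s v = zcnt s (v+1) + ind s v := by
  unfold zcnt cnt ind
  have : s.filter (fun x => v ≤ x) = s.filter (fun x => v + 1 ≤ x) ∪ s.filter (fun x => x = v) := by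
    ext x
    simp only [Finset.mem_union, Finset.mem_filter]
    constructor
    · rintro ⟨hx, hv⟩
      rcases Nat.lt_or_ge v x with h | h
      · exact Or.inl ⟨hx, h⟩
      · exact Or.inr ⟨hx, by omega⟩
    · rintro (⟨hx, hv⟩ | ⟨hx, hv⟩) <;> exact ⟨hx, by omega⟩
  rw [this, Finset.card_union_of_disjoint]
  · have : s.filter (fun x => x = v) = if v ∈ s then {v} else ∅ := by
      split
      · ext x; simp only [Finset.mem_filter, Finset.mem_singleton]
        constructor
        · rintro ⟨_, rfl⟩; rfl
        · rintro rfl; exact ⟨by assumption, rfl⟩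
      · ext x; simp only [Finset.mem_filter, Finset.notMem_empty, iff_false]
        rintro ⟨hx, rfl⟩; exact absurd hx (by assumption)
    rw [this]
    split <;> simp
  · rw [Finset.disjoint_filter]
    intro x _ hx
    omega

lemma zcnt_union {s t : Finset ℕ} (h : Disjoint s t) (v : ℕ) :
    zcnt (s ∪ t) v = zcnt s v + zcnt t v := by
  unfold zcnt cnt
  rw [Finset.filter_union, Finset.card_union_of_disjoint]
  · push_cast; ring
  · exact Finset.disjoint_filter_filter h

lemma zcnt_sdiff {s t : Finset ℕ} (h : t ⊆ s) (v : ℕ) :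
    zcnt (s \ t) v = zcnt s v - zcnt t v := by
  unfold zcnt cnt
  have hf : (s \ t).filter (fun x => v ≤ x) = s.filter (fun x => v ≤ x) \ t.filter (fun x => v ≤ x) := by
    ext x
    simp only [Finset.mem_filter, Finset.mem_sdiff]
    tauto
  rw [hf, Finset.cast_card_sdiff]
  exact Finset.filter_subset_filter _ h

lemma zcnt_singleton (a v : ℕ) : zcnt {a} v = chi a v := by
  unfold zcnt cnt chi
  rw [Finset.filter_singleton]
  split <;> simp

lemma zcnt_insert {s : Finset ℕ} {a : ℕ} (h : a ∉ s) (v : ℕ) :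
    zcnt (insert a s) v = zcnt s v + chi a v := by
  rw [Finset.insert_eq, zcnt_union (by simpa using h), zcnt_singleton]; ring

lemma zcnt_erase {s : Finset ℕ} {a : ℕ} (h : a ∈ s) (v : ℕ) :
    zcnt (s.erase a) v = zcnt s v - chi a v := by
  have : s = insert a (s.erase a) := by rw [Finset.insert_erase h]
  rw [this, zcnt_insert (Finset.notMem_erase a s)]
  simp [Finset.insert_erase h]

def NF (A B C D iA iB : ℕ → ℤ) : Prop :=
  A 0 = D 0 + 1 ∧ C 0 = B 0 ∧
  ∀ v, iA v ≤ A v - D v ∧ A v - D v ≤ 1 ∧ 0 ≤ C v - B v ∧ C v - B v ≤ 1 - iB v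

def NFs (Λ Λ' : Symb) : Prop :=
  NF (zcnt Λ.1) (zcnt Λ.2) (zcnt Λ'.1) (zcnt Λ'.2) (ind Λ.1) (ind Λ.2)

lemma Bm_iff (Λ Λ' : Symb) : Bm Λ Λ' ↔ NFs Λ Λ' := by
  constructor
  · rintro ⟨h1, h2, g1, g2, g3, g4⟩
    refine ⟨by rw [zcnt_zero, zcnt_zero]; exact_mod_cast h2.symm,
            by rw [zcnt_zero, zcnt_zero]; exact_mod_cast h1, ?_⟩
    intro v
    have e1 : cnt Λ'.2 v ≤ cnt Λ.1 (v+1) := (E1 (by omega)).mp g1 v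
    have e2 : cnt Λ.1 v ≤ cnt Λ'.2 v + 1 := (E2 (by omega)).mp g2 v
    have e4 : cnt Λ'.1 v ≤ cnt Λ.2 (v+1) + 1 := (E4 (by omega)).mp g3 v
    have e3 : cnt Λ.2 v ≤ cnt Λ'.1 v := (E3 (by omega)).mp g4 v
    have s1 := cnt_step Λ.1 v
    have s2 := cnt_step Λ.2 v
    have i1 := ind01 Λ.1 v
    have i2 := ind01 Λ.2 v
    unfold zcnt at *
    omega
  · rintro ⟨h1, h2, h3⟩
    have hc2 : Λ'.2.card + 1 = Λ.1.card := by
      rw [zcnt_zero, zcnt_zero] at h1; exact_mod_cast h1.symm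
    have hc1 : Λ'.1.card = Λ.2.card := by
      rw [zcnt_zero, zcnt_zero] at h2; exact_mod_cast h2
    refine ⟨hc1, hc2, ?_, ?_, ?_, ?_⟩
    · refine (E1 (by omega)).mpr (fun v => ?_)
      have h := h3 v
      have s1 := cnt_step Λ.1 v
      have i1 := ind01 Λ.1 v
      unfold zcnt at *; omega
    · refine (E2 (by omega)).mpr (fun v => ?_)
      have h := h3 v
      unfold zcnt at *; omega
    · refine (E4 (by omega)).mpr (fun v => ?_)
      have h := h3 v
      have s2 := cnt_step Λ.2 v
      have i2 := ind01 Λ.2 v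
      unfold zcnt at *; omega
    · refine (E3 (by omega)).mpr (fun v => ?_)
      have h := h3 v
      unfold zcnt at *; omega

lemma Bm1_iff (Λ Λ' : Symb) : Bm1 Λ Λ' ↔ NFs Λ' Λ := by
  constructor
  · rintro ⟨h1, h2, g1, g2, g3, g4⟩
    refine ⟨by rw [zcnt_zero, zcnt_zero]; exact_mod_cast h1,
            by rw [zcnt_zero, zcnt_zero]; exact_mod_cast h2.symm, ?_⟩
    intro v
    have e3 : cnt Λ'.2 v ≤ cnt Λ.1 v := (E3 (by omega)).mp g1 v
    have e4 : cnt Λ.1 v ≤ cnt Λ'.2 (v+1) + 1 := (E4 (by omega)).mp g2 v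
    have e2 : cnt Λ'.1 v ≤ cnt Λ.2 v + 1 := (E2 (by omega)).mp g3 v
    have e1 : cnt Λ.2 v ≤ cnt Λ'.1 (v+1) := (E1 (by omega)).mp g4 v
    have s1 := cnt_step Λ'.1 v
    have s2 := cnt_step Λ'.2 v
    have i1 := ind01 Λ'.1 v
    have i2 := ind01 Λ'.2 v
    unfold zcnt at *
    omega
  · rintro ⟨h1, h2, h3⟩
    have hc1 : Λ'.1.card = Λ.2.card + 1 := by
      rw [zcnt_zero, zcnt_zero] at h1; exact_mod_cast h1
    have hc2 : Λ'.2.card = Λ.1.card := by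
      rw [zcnt_zero, zcnt_zero] at h2; exact_mod_cast h2.symm
    refine ⟨hc1, hc2, ?_, ?_, ?_, ?_⟩
    · refine (E3 (by omega)).mpr (fun v => ?_)
      have h := h3 v
      unfold zcnt at *; omega
    · refine (E4 (by omega)).mpr (fun v => ?_)
      have h := h3 v
      have s2 := cnt_step Λ'.2 v
      have i2 := ind01 Λ'.2 v
      unfold zcnt at *; omega
    · refine (E2 (by omega)).mpr (fun v => ?_)
      have h := h3 v
      unfold zcnt at *; omega
    · refine (E1 (by omega)).mpr (fun v => ?_)
      have h := h3 v
      have s1 := cnt_step Λ'.1 v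
      have i1 := ind01 Λ'.1 v
      unfold zcnt at *; omega

lemma special1_cnt {Z : Symb} {m : ℕ} (h : IsSpecial1 Z m) :
    ∀ v, zcnt Z.2 v ≤ zcnt Z.1 v ∧ zcnt Z.1 v ≤ zcnt Z.2 v + 1 := by
  obtain ⟨h1, h2, g1, g2⟩ := h
  intro v
  have e3 : cnt Z.2 v ≤ cnt Z.1 v := (E3 (by omega)).mp g1 v
  have e2 : cnt Z.1 v ≤ cnt Z.2 v + 1 := (E2 (by omega)).mp g2 v
  unfold zcnt; omega

lemma special0_cnt {Z : Symb} {m : ℕ} (h : IsSpecial0 Z m) :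
    ∀ v, zcnt Z.2 v ≤ zcnt Z.1 v ∧ zcnt Z.1 v ≤ zcnt Z.2 v + 1 := by
  obtain ⟨h1, h2, g1, g2⟩ := h
  intro v
  have e3 : cnt Z.2 v ≤ cnt Z.1 v := (E3 (by omega)).mp g1 v
  have e2 : cnt Z.1 v ≤ cnt Z.2 v + 1 := (E2 (by omega)).mp g2 v
  unfold zcnt; omega
lemma downconst (x y : ℕ) (e : ℕ → ℤ) (hstep : ∀ v, x < v → v < y → e v = e (v+1)) :
    ∀ n v, v + n = y → x < v → e v = e y := by
  intro n
  induction n with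
  | zero => intro v h _; rw [show v = y by omega]
  | succ k ih =>
    intro v h hx
    rw [hstep v hx (by omega)]
    exact ih (v+1) (by omega) (by omega)

lemma downconst' (x y : ℕ) (e : ℕ → ℤ) (hstep : ∀ v, x < v → v < y → e v = e (v+1)) :
    ∀ v, x < v → v ≤ y → e v = e y := fun v h1 h2 =>
  downconst x y e hstep (y - v) v (by omega) h1

lemma coreA (x y : ℕ) (hxy : x < y)
    (A B C D C₂ D₂ iA iB iC iD : ℕ → ℤ)
    (stA : ∀ v, A v = A (v+1) + iA v) (stB : ∀ v, B v = B (v+1) + iB v)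
    (stC : ∀ v, C v = C (v+1) + iC v) (stD : ∀ v, D v = D (v+1) + iD v)
    (rA : ∀ v, 0 ≤ iA v ∧ iA v ≤ 1) (rB : ∀ v, 0 ≤ iB v ∧ iB v ≤ 1)
    (rC : ∀ v, 0 ≤ iC v ∧ iC v ≤ 1) (rD : ∀ v, 0 ≤ iD v ∧ iD v ≤ 1)
    (hint : ∀ v, x < v → v < y → iA v = 0 ∧ iB v = 0 ∧ iC v = 0 ∧ iD v = 0)
    (hyA : iA y = 0) (hyB : iB y = 0) (hyCD : iC y + iD y = 1) (hxCD : iC x + iD x = 1)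
    (hEF : ∀ v, x < v → v ≤ y → A v + B v = C v + D v)
    (h : ∀ v, iA v ≤ A v - D v ∧ A v - D v ≤ 1 ∧ 0 ≤ C v - B v ∧ C v - B v ≤ 1 - iB v)
    (hC₂a : ∀ v, ¬(x < v ∧ v ≤ y) → C₂ v = C v)
    (hC₂b : ∀ v, x < v → v ≤ y → C₂ v = C v + (iD y - iC y))
    (hD₂a : ∀ v, ¬(x < v ∧ v ≤ y) → D₂ v = D v)
    (hD₂b : ∀ v, x < v → v ≤ y → D₂ v = D v + (iC y - iD y)) :
    (iD y = iC x →
      ∀ v, iA v ≤ A v - D₂ v ∧ A v - D₂ v ≤ 1 ∧ 0 ≤ C₂ v - B v ∧ C₂ v - B v ≤ 1 - iB v)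
    ∧ (iD y = iD x → False) := by
  have econst : ∀ v, x < v → v ≤ y → A v - D v = A y - D y := by
    apply downconst'
    intro v h1 h2
    have hi := hint v h1 h2
    have := stA v; have := stD v
    omega
  have fconst : ∀ v, x < v → v ≤ y → C v - B v = C y - B y := by
    apply downconst'
    intro v h1 h2
    have hi := hint v h1 h2
    have := stC v; have := stB v
    omega
  have efy : A y - D y = C y - B y := by
    have := hEF y (by omega) le_rfl; omega
  have hw : C y - B y = iC y := by
    have h1 := h (y+1); have h2 := h y
    have := stA y; have := stD y; have := stC y; have := stB y
    have := rC y; have := rD y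
    omega
  constructor
  · intro hs v
    by_cases hv : x < v ∧ v ≤ y
    · obtain ⟨hv1, hv2⟩ := hv
      have hC := hC₂b v hv1 hv2
      have hD := hD₂b v hv1 hv2
      have he := econst v hv1 hv2
      have hf := fconst v hv1 hv2
      have hiA : iA v = 0 := by
        rcases eq_or_lt_of_le hv2 with rfl | hlt
        · exact hyA
        · exact (hint v hv1 hlt).1
      have hiB : iB v = 0 := by
        rcases eq_or_lt_of_le hv2 with rfl | hlt
        · exact hyB
        · exact (hint v hv1 hlt).2.1
      have := rC y; have := rD y
      omega
    · have hC := hC₂a v hv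
      have hD := hD₂a v hv
      have := h v
      omega
  · intro hmix
    have hx1 := h x
    have hx2 := econst (x+1) (by omega) (by omega)
    have hx3 := fconst (x+1) (by omega) (by omega)
    have := stA x; have := stD x; have := stC x; have := stB x
    have := rA x; have := rB x; have := rC x; have := rD x
    have := rC y; have := rD y
    omega

lemma coreB (x y : ℕ) (hxy : x < y)
    (A B C D A₂ B₂ iA iB iC iD iA₂ iB₂ : ℕ → ℤ)
    (stA : ∀ v, A v = A (v+1) + iA v) (stB : ∀ v, B v = B (v+1) + iB v)
    (stC : ∀ v, C v = C (v+1) + iC v) (stD : ∀ v, D v = D (v+1) + iD v)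
    (rA : ∀ v, 0 ≤ iA v ∧ iA v ≤ 1) (rB : ∀ v, 0 ≤ iB v ∧ iB v ≤ 1)
    (rC : ∀ v, 0 ≤ iC v ∧ iC v ≤ 1) (rD : ∀ v, 0 ≤ iD v ∧ iD v ≤ 1)
    (hint : ∀ v, x < v → v < y → iA v = 0 ∧ iB v = 0 ∧ iC v = 0 ∧ iD v = 0)
    (hyAB : iA y + iB y = 1) (hxAB : iA x + iB x = 1) (hxC : iC x = 0) (hxD : iD x = 0)
    (hEF : ∀ v, x < v → v ≤ y → A v + B v = C v + D v)
    (h : ∀ v, iA v ≤ A v - D v ∧ A v - D v ≤ 1 ∧ 0 ≤ C v - B v ∧ C v - B v ≤ 1 - iB v)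
    (hA₂a : ∀ v, ¬(x < v ∧ v ≤ y) → A₂ v = A v)
    (hA₂b : ∀ v, x < v → v ≤ y → A₂ v = A v + (iB y - iA y))
    (hB₂a : ∀ v, ¬(x < v ∧ v ≤ y) → B₂ v = B v)
    (hB₂b : ∀ v, x < v → v ≤ y → B₂ v = B v + (iA y - iB y))
    (hiA₂ : ∀ v, v ≠ x → v ≠ y → iA₂ v = iA v) (hiA₂x : iA₂ x = iB x) (hiA₂y : iA₂ y = iB y)
    (hiB₂ : ∀ v, v ≠ x → v ≠ y → iB₂ v = iB v) (hiB₂x : iB₂ x = iA x) (hiB₂y : iB₂ y = iA y) :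
    (iB y = iA x →
      ∀ v, iA₂ v ≤ A₂ v - D v ∧ A₂ v - D v ≤ 1 ∧ 0 ≤ C v - B₂ v ∧ C v - B₂ v ≤ 1 - iB₂ v)
    ∧ (iA y = iA x → False) := by
  have econst : ∀ v, x < v → v ≤ y → A v - D v = A y - D y := by
    apply downconst'
    intro v h1 h2
    have hi := hint v h1 h2
    have := stA v; have := stD v
    omega
  have fconst : ∀ v, x < v → v ≤ y → C v - B v = C y - B y := by
    apply downconst'
    intro v h1 h2
    have hi := hint v h1 h2
    have := stC v; have := stB v
    omega
  have efy : A y - D y = C y - B y := by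
    have := hEF y (by omega) le_rfl; omega
  have hw : C y - B y = iA y := by
    have h1 := h (y+1); have h2 := h y
    have := stA y; have := stD y; have := stC y; have := stB y
    have := rA y; have := rB y
    omega
  constructor
  · intro hs v
    rcases eq_or_ne v x with rfl | hvx
    · have hA := hA₂a v (by omega)
      have hB := hB₂a v (by omega)
      have he2 := econst (v+1) (by omega) (by omega)
      have hf2 := fconst (v+1) (by omega) (by omega)
      have := stA v; have := stD v; have := stC v; have := stB v
      have := rA v; have := rB v; have := rA y; have := rB y
      have := h v
      rw [hiA₂x, hiB₂x]
      omega
    by_cases hv : x < v ∧ v ≤ y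
    · obtain ⟨hv1, hv2⟩ := hv
      have hA := hA₂b v hv1 hv2
      have hB := hB₂b v hv1 hv2
      have he := econst v hv1 hv2
      have hf := fconst v hv1 hv2
      rcases eq_or_lt_of_le hv2 with rfl | hlt
      · rw [hiA₂y, hiB₂y]
        have := rA v; have := rB v
        omega
      · have hi := hint v hv1 hlt
        rw [hiA₂ v hvx (by omega), hiB₂ v hvx (by omega)]
        have := rA y; have := rB y
        omega
    · have hA := hA₂a v hv
      have hB := hB₂a v hv
      rw [hiA₂ v hvx (by omega), hiB₂ v hvx (by omega)]
      have := h v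
      omega
  · intro hmix
    have hx1 := h x
    have hx2 := econst (x+1) (by omega) (by omega)
    have hx3 := fconst (x+1) (by omega) (by omega)
    have := stA x; have := stD x; have := stC x; have := stB x
    have := rA x; have := rB x; have := rA y; have := rB y
    omega
lemma chi_le {a v : ℕ} (h : v ≤ a) : chi a v = 1 := by simp [chi, h]
lemma chi_gt {a v : ℕ} (h : a < v) : chi a v = 0 := by
  simp only [chi, if_neg (by omega : ¬ v ≤ a)]

lemma zcnt_swaprow {V2 : Finset ℕ} {c d : ℕ} (hd : d ∈ V2) (hc : c ∉ V2) (v : ℕ) :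
    zcnt ((V2 \ {d}) ∪ {c}) v = zcnt V2 v - chi d v + chi c v := by
  rw [zcnt_union (by simp [Finset.disjoint_singleton_right, Finset.mem_sdiff, hc]),
      zcnt_sdiff (Finset.singleton_subset_iff.mpr hd), zcnt_singleton, zcnt_singleton]

lemma ind_swap_eq {V1 : Finset ℕ} {c d v : ℕ} (h1 : v ≠ c) (h2 : v ≠ d) :
    ind ((V1 \ {c}) ∪ {d}) v = ind V1 v := by
  simp [ind, Finset.mem_union, Finset.mem_sdiff, Finset.mem_singleton, h1, h2]

lemma ind_swap_in {V1 : Finset ℕ} {c d : ℕ} :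
    ind ((V1 \ {c}) ∪ {d}) d = 1 := by
  simp [ind, Finset.mem_union]

lemma ind_swap_out {V1 : Finset ℕ} {c d : ℕ} (h : c ≠ d) :
    ind ((V1 \ {c}) ∪ {d}) c = 0 := by
  simp [ind, Finset.mem_union, Finset.mem_sdiff, Finset.mem_singleton, h]

lemma structA (U1 U2 V1 V2 : Finset ℕ) (c d : ℕ)
    (hc1 : c ∈ V1) (hc2 : c ∉ V2) (hd1 : d ∈ V2) (hd2 : d ∉ V1)
    (hbet : ∀ v, min c d < v → v < max c d → (v ∈ V1 ↔ v ∈ V2))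
    (hU : ∀ v, zcnt U2 v ≤ zcnt U1 v ∧ zcnt U1 v ≤ zcnt U2 v + 1)
    (hV : ∀ v, zcnt V2 v ≤ zcnt V1 v ∧ zcnt V1 v ≤ zcnt V2 v + 1)
    (hH : ∀ v, ind U1 v ≤ zcnt U1 v - zcnt ((V2 \ {d}) ∪ {c}) v
        ∧ zcnt U1 v - zcnt ((V2 \ {d}) ∪ {c}) v ≤ 1
        ∧ 0 ≤ zcnt ((V1 \ {c}) ∪ {d}) v - zcnt U2 v
        ∧ zcnt ((V1 \ {c}) ∪ {d}) v - zcnt U2 v ≤ 1 - ind U2 v) :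
    (∀ v, min c d < v → v ≤ max c d → zcnt U1 v = zcnt V1 v ∧ zcnt U2 v = zcnt V2 v) ∧
    (∀ v, min c d < v → v < max c d → v ∉ U1 ∧ v ∉ U2 ∧ v ∉ V1 ∧ v ∉ V2) ∧
    (max c d ∉ U1 ∧ max c d ∉ U2) := by
  have hcd : c ≠ d := fun h => hd2 (h ▸ hc1)
  rcases Nat.lt_or_ge d c with hlt | hge
  · -- σ = 1 : d < c, S = (d, c]
    rw [min_eq_right (le_of_lt hlt), max_eq_left (le_of_lt hlt)]
    have P1 : ∀ v, d < v → v ≤ c →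
        zcnt U1 v = zcnt V1 v ∧ zcnt U2 v = zcnt V2 v ∧
        zcnt U1 v = zcnt U2 v + 1 ∧ ind U1 v = 0 := by
      intro v h1 h2
      have hh := hH v
      rw [zcnt_swaprow hd1 hc2, zcnt_swaprow hc1 hd2, chi_le h2, chi_gt h1] at hh
      have := hU v; have := hV v; have := ind01 U1 v
      omega
    refine ⟨fun v h1 h2 => ⟨(P1 v h1 h2).1, (P1 v h1 h2).2.1⟩, ?_, ?_, ?_⟩
    · intro v h1 h2
      have e1 := P1 v h1 (by omega)
      have e2 := P1 (v+1) (by omega) (by omega)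
      have s1 := cnt_step U1 v; have s2 := cnt_step U2 v
      have s3 := cnt_step V1 v; have s4 := cnt_step V2 v
      have hv1 : v ∉ V1 := by
        apply not_mem_of_ind; omega
      have hv2 : v ∉ V2 := fun hm => hv1 ((hbet v (by omega) (by omega)).mpr hm)
      refine ⟨not_mem_of_ind e1.2.2.2, ?_, hv1, hv2⟩
      apply not_mem_of_ind
      have := ind_of_not_mem hv2
      omega
    · exact not_mem_of_ind (P1 c hlt le_rfl).2.2.2
    · have hh := hH c
      rw [zcnt_swaprow hd1 hc2, chi_le le_rfl, chi_gt hlt] at hh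
      have e1 := P1 c hlt le_rfl
      have s1 := cnt_step U1 c; have s2 := cnt_step U2 c
      have := hU (c+1); have := ind01 U2 c
      apply not_mem_of_ind; omega
  · -- σ = 0 : c < d, S = (c, d]
    have hlt : c < d := by omega
    rw [min_eq_left (le_of_lt hlt), max_eq_right (le_of_lt hlt)]
    have P1 : ∀ v, c < v → v ≤ d →
        zcnt U1 v = zcnt V1 v ∧ zcnt U2 v = zcnt V2 v ∧
        zcnt U1 v = zcnt U2 v ∧ ind U2 v = 0 := by
      intro v h1 h2
      have hh := hH v
      rw [zcnt_swaprow hd1 hc2, zcnt_swaprow hc1 hd2, chi_le h2, chi_gt h1] at hh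
      have := hU v; have := hV v; have := ind01 U2 v
      omega
    refine ⟨fun v h1 h2 => ⟨(P1 v h1 h2).1, (P1 v h1 h2).2.1⟩, ?_, ?_, ?_⟩
    · intro v h1 h2
      have e1 := P1 v h1 (by omega)
      have e2 := P1 (v+1) (by omega) (by omega)
      have s1 := cnt_step U1 v; have s2 := cnt_step U2 v
      have s3 := cnt_step V1 v; have s4 := cnt_step V2 v
      have hv2 : v ∉ V2 := by
        apply not_mem_of_ind; omega
      have hv1 : v ∉ V1 := fun hm => hv2 ((hbet v (by omega) (by omega)).mp hm)
      refine ⟨?_, not_mem_of_ind e1.2.2.2, hv1, hv2⟩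
      apply not_mem_of_ind
      have := ind_of_not_mem hv1
      omega
    · have hh := hH d
      rw [zcnt_swaprow hc1 hd2, chi_le le_rfl, chi_gt hlt] at hh
      have e1 := P1 d hlt le_rfl
      have s1 := cnt_step U1 d; have s2 := cnt_step U2 d
      have := hU (d+1); have := ind01 U1 d
      apply not_mem_of_ind; omega
    · exact not_mem_of_ind (P1 d hlt le_rfl).2.2.2

lemma structB (W1 W2 T1 T2 : Finset ℕ) (c d : ℕ)
    (hc1 : c ∈ W1) (hc2 : c ∉ W2) (hd1 : d ∈ W2) (hd2 : d ∉ W1)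
    (hbet : ∀ v, min c d < v → v < max c d → (v ∈ W1 ↔ v ∈ W2))
    (hW : ∀ v, zcnt W2 v ≤ zcnt W1 v ∧ zcnt W1 v ≤ zcnt W2 v + 1)
    (hT : ∀ v, zcnt T2 v ≤ zcnt T1 v ∧ zcnt T1 v ≤ zcnt T2 v + 1)
    (hH : ∀ v, ind ((W1 \ {c}) ∪ {d}) v ≤ zcnt ((W1 \ {c}) ∪ {d}) v - zcnt T2 v
        ∧ zcnt ((W1 \ {c}) ∪ {d}) v - zcnt T2 v ≤ 1
        ∧ 0 ≤ zcnt T1 v - zcnt ((W2 \ {d}) ∪ {c}) v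
        ∧ zcnt T1 v - zcnt ((W2 \ {d}) ∪ {c}) v ≤ 1 - ind ((W2 \ {d}) ∪ {c}) v) :
    (∀ v, min c d < v → v ≤ max c d → zcnt W1 v = zcnt T1 v ∧ zcnt W2 v = zcnt T2 v) ∧
    (∀ v, min c d < v → v < max c d → v ∉ W1 ∧ v ∉ W2 ∧ v ∉ T1 ∧ v ∉ T2) ∧
    (min c d ∉ T1 ∧ min c d ∉ T2) := by
  have hcd : c ≠ d := fun h => hd2 (h ▸ hc1)
  rcases Nat.lt_or_ge d c with hlt | hge
  · -- σ = 1 : d < c, S = (d, c], x = d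
    rw [min_eq_right (le_of_lt hlt), max_eq_left (le_of_lt hlt)]
    have P1 : ∀ v, d < v → v ≤ c →
        zcnt W1 v = zcnt T1 v ∧ zcnt W2 v = zcnt T2 v ∧ zcnt W1 v = zcnt W2 v + 1 := by
      intro v h1 h2
      have hh := hH v
      rw [zcnt_swaprow hd1 hc2, zcnt_swaprow hc1 hd2, chi_le h2, chi_gt h1] at hh
      have := hW v; have := hT v
      have := ind01 ((W1 \ {c}) ∪ {d}) v; have := ind01 ((W2 \ {d}) ∪ {c}) v
      omega
    have hint : ∀ v, d < v → v < c → v ∉ W1 ∧ v ∉ W2 ∧ v ∉ T1 ∧ v ∉ T2 := by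
      intro v h1 h2
      have hh := hH v
      rw [zcnt_swaprow hd1 hc2, zcnt_swaprow hc1 hd2, chi_le (by omega : v ≤ c),
          chi_gt h1, ind_swap_eq (by omega : v ≠ c) (by omega : v ≠ d)] at hh
      have e1 := P1 v h1 (by omega)
      have e2 := P1 (v+1) (by omega) (by omega)
      have s1 := cnt_step W1 v; have s2 := cnt_step W2 v
      have s3 := cnt_step T1 v; have s4 := cnt_step T2 v
      have := ind01 W1 v
      have hw1 : v ∉ W1 := by apply not_mem_of_ind; omega
      have hw2 : v ∉ W2 := fun hm => hw1 ((hbet v (by omega) (by omega)).mpr hm)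
      have iw1 := ind_of_not_mem hw1; have iw2 := ind_of_not_mem hw2
      exact ⟨hw1, hw2, not_mem_of_ind (by omega), not_mem_of_ind (by omega)⟩
    refine ⟨fun v h1 h2 => ⟨(P1 v h1 h2).1, (P1 v h1 h2).2.1⟩, hint, ?_, ?_⟩
    · -- d ∉ T1 : via spec T at d, after d ∉ T2
      have hh := hH d
      rw [zcnt_swaprow hd1 hc2, zcnt_swaprow hc1 hd2, chi_le (le_of_lt hlt), chi_le le_rfl,
          ind_swap_in] at hh
      have e1 := P1 (d+1) (by omega) (by omega)
      have s1 := cnt_step W1 d; have s2 := cnt_step T2 d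
      have s3 := cnt_step T1 d; have s4 := cnt_step W2 d
      have iw1 := ind_of_not_mem hd2
      have := hT d; have := ind01 T1 d; have := ind01 T2 d
      apply not_mem_of_ind; omega
    · have hh := hH d
      rw [zcnt_swaprow hd1 hc2, zcnt_swaprow hc1 hd2, chi_le (le_of_lt hlt), chi_le le_rfl,
          ind_swap_in] at hh
      have e1 := P1 (d+1) (by omega) (by omega)
      have s1 := cnt_step W1 d; have s2 := cnt_step T2 d
      have iw1 := ind_of_not_mem hd2
      have := ind01 T2 d
      apply not_mem_of_ind; omega
  · -- σ = 0 : c < d, S = (c, d], x = c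
    have hlt : c < d := by omega
    rw [min_eq_left (le_of_lt hlt), max_eq_right (le_of_lt hlt)]
    have P1 : ∀ v, c < v → v ≤ d →
        zcnt W1 v = zcnt T1 v ∧ zcnt W2 v = zcnt T2 v ∧ zcnt W1 v = zcnt W2 v := by
      intro v h1 h2
      have hh := hH v
      rw [zcnt_swaprow hd1 hc2, zcnt_swaprow hc1 hd2, chi_le h2, chi_gt h1] at hh
      have := hW v; have := hT v
      have := ind01 ((W1 \ {c}) ∪ {d}) v; have := ind01 ((W2 \ {d}) ∪ {c}) v
      omega
    have hint : ∀ v, c < v → v < d → v ∉ W1 ∧ v ∉ W2 ∧ v ∉ T1 ∧ v ∉ T2 := by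
      intro v h1 h2
      have hh := hH v
      rw [zcnt_swaprow hd1 hc2, zcnt_swaprow hc1 hd2, chi_le (by omega : v ≤ d),
          chi_gt h1] at hh
      rw [show ind ((W2 \ {d}) ∪ {c}) v = ind W2 v from
        ind_swap_eq (by omega : v ≠ d) (by omega : v ≠ c)] at hh
      have e1 := P1 v h1 (by omega)
      have e2 := P1 (v+1) (by omega) (by omega)
      have s1 := cnt_step W1 v; have s2 := cnt_step W2 v
      have s3 := cnt_step T1 v; have s4 := cnt_step T2 v
      have := ind01 W2 v
      have hw2 : v ∉ W2 := by apply not_mem_of_ind; omega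
      have hw1 : v ∉ W1 := fun hm => hw2 ((hbet v (by omega) (by omega)).mp hm)
      have iw1 := ind_of_not_mem hw1; have iw2 := ind_of_not_mem hw2
      exact ⟨hw1, hw2, not_mem_of_ind (by omega), not_mem_of_ind (by omega)⟩
    refine ⟨fun v h1 h2 => ⟨(P1 v h1 h2).1, (P1 v h1 h2).2.1⟩, hint, ?_, ?_⟩
    · have hh := hH c
      rw [zcnt_swaprow hd1 hc2, zcnt_swaprow hc1 hd2, chi_le (le_of_lt hlt), chi_le le_rfl] at hh
      rw [show ind ((W2 \ {d}) ∪ {c}) c = 1 from ind_swap_in] at hh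
      have e1 := P1 (c+1) (by omega) (by omega)
      have s1 := cnt_step W2 c; have s2 := cnt_step T1 c
      have iw2 := ind_of_not_mem hc2
      have := ind01 T1 c
      apply not_mem_of_ind; omega
    · have hh := hH c
      rw [zcnt_swaprow hd1 hc2, zcnt_swaprow hc1 hd2, chi_le (le_of_lt hlt), chi_le le_rfl] at hh
      rw [show ind ((W2 \ {d}) ∪ {c}) c = 1 from ind_swap_in] at hh
      have e1 := P1 (c+1) (by omega) (by omega)
      have s1 := cnt_step W2 c; have s2 := cnt_step T1 c
      have s3 := cnt_step T2 c
      have iw2 := ind_of_not_mem hc2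
      have := hT c; have := ind01 T2 c; have := ind01 T1 c
      apply not_mem_of_ind; omega
lemma ind_bounds (s : Finset ℕ) (v : ℕ) : 0 ≤ ind s v ∧ ind s v ≤ 1 := by
  rcases ind01 s v with h | h <;> omega

lemma symmDiff_of_mem {s : Finset ℕ} {c : ℕ} (h : c ∈ s) : s ∆ {c} = s.erase c := by
  ext x
  simp only [Finset.mem_symmDiff, Finset.mem_singleton, Finset.mem_erase]
  constructor
  · rintro (⟨h1, h2⟩ | ⟨rfl, h2⟩)
    · exact ⟨h2, h1⟩
    · exact absurd h h2
  · rintro ⟨h1, h2⟩; exact Or.inl ⟨h2, h1⟩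

lemma symmDiff_of_not_mem {s : Finset ℕ} {c : ℕ} (h : c ∉ s) : s ∆ {c} = insert c s := by
  ext x
  simp only [Finset.mem_symmDiff, Finset.mem_singleton, Finset.mem_insert]
  constructor
  · rintro (⟨h1, h2⟩ | ⟨rfl, _⟩)
    · exact Or.inr h1
    · exact Or.inl rfl
  · rintro (rfl | h1)
    · exact Or.inr ⟨rfl, h⟩
    · exact Or.inl ⟨h1, fun he => h (he ▸ h1)⟩

section swapsec

variable {Y N : Symb} {c d : ℕ}

lemma swap_subZI (hc1 : c ∈ Y.1) (hc2 : c ∉ Y.2) (hd1 : d ∈ Y.2) (hd2 : d ∉ Y.1)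
    (hN : SubZI N Y) : SubZI (N.1 ∆ {c}, N.2 ∆ {d}) Y := by
  constructor
  · by_cases h : c ∈ N.1
    · rw [show (N.1 ∆ {c}, N.2 ∆ {d}).1 = N.1 ∆ {c} from rfl, symmDiff_of_mem h]
      exact (Finset.erase_subset _ _).trans hN.1
    · rw [show (N.1 ∆ {c}, N.2 ∆ {d}).1 = N.1 ∆ {c} from rfl, symmDiff_of_not_mem h]
      exact Finset.insert_subset (Finset.mem_sdiff.mpr ⟨hc1, hc2⟩) hN.1
  · by_cases h : d ∈ N.2
    · rw [show (N.1 ∆ {c}, N.2 ∆ {d}).2 = N.2 ∆ {d} from rfl, symmDiff_of_mem h]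
      exact (Finset.erase_subset _ _).trans hN.2
    · rw [show (N.1 ∆ {c}, N.2 ∆ {d}).2 = N.2 ∆ {d} from rfl, symmDiff_of_not_mem h]
      exact Finset.insert_subset (Finset.mem_sdiff.mpr ⟨hd1, hd2⟩) hN.2

lemma zcnt_lam1 (hN : SubZI N Y) (v : ℕ) :
    zcnt (lam Y N).1 v = zcnt Y.1 v - zcnt N.1 v + zcnt N.2 v := by
  have h1 : N.1 ⊆ Y.1 := hN.1.trans (Finset.sdiff_subset)
  have h2 : Disjoint (Y.1 \ N.1) N.2 := by
    rw [Finset.disjoint_right]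
    intro a ha
    have := Finset.mem_sdiff.mp (hN.2 ha)
    simp only [Finset.mem_sdiff]
    tauto
  rw [show (lam Y N).1 = (Y.1 \ N.1) ∪ N.2 from rfl, zcnt_union h2, zcnt_sdiff h1]

lemma zcnt_lam2 (hN : SubZI N Y) (v : ℕ) :
    zcnt (lam Y N).2 v = zcnt Y.2 v - zcnt N.2 v + zcnt N.1 v := by
  have h1 : N.2 ⊆ Y.2 := hN.2.trans (Finset.sdiff_subset)
  have h2 : Disjoint (Y.2 \ N.2) N.1 := by
    rw [Finset.disjoint_right]
    intro a ha
    have := Finset.mem_sdiff.mp (hN.1 ha)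
    simp only [Finset.mem_sdiff]
    tauto
  rw [show (lam Y N).2 = (Y.2 \ N.2) ∪ N.1 from rfl, zcnt_union h2, zcnt_sdiff h1]

lemma zcnt_lam_sum (hN : SubZI N Y) (v : ℕ) :
    zcnt (lam Y N).1 v + zcnt (lam Y N).2 v = zcnt Y.1 v + zcnt Y.2 v := by
  rw [zcnt_lam1 hN, zcnt_lam2 hN]; ring

lemma not_mem_lam (hN : SubZI N Y) {v : ℕ} (h1 : v ∉ Y.1) (h2 : v ∉ Y.2) :
    v ∉ (lam Y N).1 ∧ v ∉ (lam Y N).2 := by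
  constructor
  · intro hm
    rcases Finset.mem_union.mp hm with hm | hm
    · exact h1 (Finset.mem_sdiff.mp hm).1
    · exact h2 (Finset.mem_sdiff.mp (hN.2 hm)).1
  · intro hm
    rcases Finset.mem_union.mp hm with hm | hm
    · exact h2 (Finset.mem_sdiff.mp hm).1
    · exact h1 (Finset.mem_sdiff.mp (hN.1 hm)).1

lemma mem_lam_c (hc1 : c ∈ Y.1) (hc2 : c ∉ Y.2) (hN : SubZI N Y) :
    (c ∈ (lam Y N).1 ↔ c ∉ N.1) ∧ (c ∈ (lam Y N).2 ↔ c ∈ N.1) := by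
  have hcn2 : c ∉ N.2 := fun hm => hc2 (Finset.mem_sdiff.mp (hN.2 hm)).1
  constructor
  · simp only [lam, Finset.mem_union, Finset.mem_sdiff]
    tauto
  · simp only [lam, Finset.mem_union, Finset.mem_sdiff]
    tauto

lemma mem_lam_d (hd1 : d ∈ Y.2) (hd2 : d ∉ Y.1) (hN : SubZI N Y) :
    (d ∈ (lam Y N).1 ↔ d ∈ N.2) ∧ (d ∈ (lam Y N).2 ↔ d ∉ N.2) := by
  have hdn1 : d ∉ N.1 := fun hm => hd2 (Finset.mem_sdiff.mp (hN.1 hm)).1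
  constructor
  · simp only [lam, Finset.mem_union, Finset.mem_sdiff]
    tauto
  · simp only [lam, Finset.mem_union, Finset.mem_sdiff]
    tauto

lemma ind_lam_sum_c (hc1 : c ∈ Y.1) (hc2 : c ∉ Y.2) (hN : SubZI N Y) :
    ind (lam Y N).1 c + ind (lam Y N).2 c = 1 := by
  have h := mem_lam_c hc1 hc2 hN
  by_cases hc : c ∈ N.1
  · rw [ind_of_not_mem (by rw [h.1]; simp [hc]), ind_of_mem (h.2.mpr hc)]; norm_num
  · rw [ind_of_mem (h.1.mpr hc), ind_of_not_mem (by rw [h.2]; exact hc)]; norm_num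

lemma ind_lam_sum_d (hd1 : d ∈ Y.2) (hd2 : d ∉ Y.1) (hN : SubZI N Y) :
    ind (lam Y N).1 d + ind (lam Y N).2 d = 1 := by
  have h := mem_lam_d hd1 hd2 hN
  by_cases hd : d ∈ N.2
  · rw [ind_of_mem (h.1.mpr hd), ind_of_not_mem (by rw [h.2]; simp [hd])]; norm_num
  · rw [ind_of_not_mem (by rw [h.1]; exact hd), ind_of_mem (h.2.mpr hd)]; norm_num

lemma zcnt_swap (hc1 : c ∈ Y.1) (hc2 : c ∉ Y.2) (hd1 : d ∈ Y.2) (hd2 : d ∉ Y.1)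
    (hN : SubZI N Y) (v : ℕ) :
    zcnt (lam Y (N.1 ∆ {c}, N.2 ∆ {d})).1 v
      = zcnt (lam Y N).1 v
        - (ind (lam Y N).1 c - ind (lam Y N).2 c) * chi c v
        - (ind (lam Y N).1 d - ind (lam Y N).2 d) * chi d v ∧
    zcnt (lam Y (N.1 ∆ {c}, N.2 ∆ {d})).2 v
      = zcnt (lam Y N).2 v
        + (ind (lam Y N).1 c - ind (lam Y N).2 c) * chi c v
        + (ind (lam Y N).1 d - ind (lam Y N).2 d) * chi d v := by
  have hNΔ := swap_subZI hc1 hc2 hd1 hd2 hN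
  have hmc := mem_lam_c hc1 hc2 hN
  have hmd := mem_lam_d hd1 hd2 hN
  have e1 := zcnt_lam1 hNΔ v
  have e2 := zcnt_lam2 hNΔ v
  have f1 := zcnt_lam1 hN v
  have f2 := zcnt_lam2 hN v
  simp only [show (N.1 ∆ {c}, N.2 ∆ {d}).1 = N.1 ∆ {c} from rfl,
             show (N.1 ∆ {c}, N.2 ∆ {d}).2 = N.2 ∆ {d} from rfl] at e1 e2
  set q1 := zcnt (lam Y (N.1 ∆ {c}, N.2 ∆ {d})).1 v with hq1
  set q2 := zcnt (lam Y (N.1 ∆ {c}, N.2 ∆ {d})).2 v with hq2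
  by_cases hc : c ∈ N.1 <;> by_cases hd : d ∈ N.2
  · rw [symmDiff_of_mem hc, symmDiff_of_mem hd, zcnt_erase hc, zcnt_erase hd] at e1 e2
    rw [ind_of_not_mem (by rw [hmc.1]; simp [hc]), ind_of_mem (hmc.2.mpr hc),
        ind_of_mem (hmd.1.mpr hd), ind_of_not_mem (by rw [hmd.2]; simp [hd])]
    constructor <;> omega
  · rw [symmDiff_of_mem hc, symmDiff_of_not_mem hd, zcnt_erase hc,
        zcnt_insert hd] at e1 e2
    rw [ind_of_not_mem (by rw [hmc.1]; simp [hc]), ind_of_mem (hmc.2.mpr hc),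
        ind_of_not_mem (by rw [hmd.1]; exact hd), ind_of_mem (hmd.2.mpr hd)]
    constructor <;> omega
  · rw [symmDiff_of_not_mem hc, symmDiff_of_mem hd,
        zcnt_insert hc, zcnt_erase hd] at e1 e2
    rw [ind_of_mem (hmc.1.mpr hc), ind_of_not_mem (by rw [hmc.2]; exact hc),
        ind_of_mem (hmd.1.mpr hd), ind_of_not_mem (by rw [hmd.2]; simp [hd])]
    constructor <;> omega
  · rw [symmDiff_of_not_mem hc, symmDiff_of_not_mem hd,
        zcnt_insert hc, zcnt_insert hd] at e1 e2
    rw [ind_of_mem (hmc.1.mpr hc), ind_of_not_mem (by rw [hmc.2]; exact hc),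
        ind_of_not_mem (by rw [hmd.1]; exact hd), ind_of_mem (hmd.2.mpr hd)]
    constructor <;> omega

lemma mem_lamswap_ne (hN : SubZI N Y) {v : ℕ} (h1 : v ≠ c) (h2 : v ≠ d) :
    (v ∈ (lam Y (N.1 ∆ {c}, N.2 ∆ {d})).1 ↔ v ∈ (lam Y N).1) ∧
    (v ∈ (lam Y (N.1 ∆ {c}, N.2 ∆ {d})).2 ↔ v ∈ (lam Y N).2) := by
  have e1 : v ∈ N.1 ∆ {c} ↔ v ∈ N.1 := by
    simp [Finset.mem_symmDiff, Finset.mem_singleton, h1]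
  have e2 : v ∈ N.2 ∆ {d} ↔ v ∈ N.2 := by
    simp [Finset.mem_symmDiff, Finset.mem_singleton, h2]
  constructor <;>
  · simp only [lam, Finset.mem_union, Finset.mem_sdiff]
    rw [e1, e2]

lemma ind_lamswap_ne (hN : SubZI N Y) {v : ℕ} (h1 : v ≠ c) (h2 : v ≠ d) :
    ind (lam Y (N.1 ∆ {c}, N.2 ∆ {d})).1 v = ind (lam Y N).1 v ∧
    ind (lam Y (N.1 ∆ {c}, N.2 ∆ {d})).2 v = ind (lam Y N).2 v := by
  have h := mem_lamswap_ne (c := c) (d := d) hN h1 h2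
  constructor <;> simp [ind, h.1, h.2]

lemma ind_lamswap_c (hc1 : c ∈ Y.1) (hc2 : c ∉ Y.2) (hd1 : d ∈ Y.2) (hd2 : d ∉ Y.1)
    (hN : SubZI N Y) :
    ind (lam Y (N.1 ∆ {c}, N.2 ∆ {d})).1 c = ind (lam Y N).2 c ∧
    ind (lam Y (N.1 ∆ {c}, N.2 ∆ {d})).2 c = ind (lam Y N).1 c := by
  have hcd : c ≠ d := fun h => hd2 (h ▸ hc1)
  have hNΔ := swap_subZI hc1 hc2 hd1 hd2 hN
  have hmc := mem_lam_c hc1 hc2 hN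
  have hmcΔ := mem_lam_c hc1 hc2 hNΔ
  have hx : (c ∈ N.1 ∆ {c}) ↔ c ∉ N.1 := by
    simp [Finset.mem_symmDiff, Finset.mem_singleton]
  rw [show (N.1 ∆ {c}, N.2 ∆ {d}).1 = N.1 ∆ {c} from rfl] at hmcΔ
  by_cases hc : c ∈ N.1
  · rw [ind_of_mem (hmcΔ.1.mpr (by rw [hx]; simp [hc])), ind_of_mem (hmc.2.mpr hc),
        ind_of_not_mem (by rw [hmcΔ.2, hx]; simp [hc]), ind_of_not_mem (by rw [hmc.1]; simp [hc])]
    exact ⟨rfl, rfl⟩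
  · rw [ind_of_not_mem (by rw [hmcΔ.1]; rw [hx]; simp [hc]), ind_of_not_mem (by rw [hmc.2]; exact hc),
        ind_of_mem (hmcΔ.2.mpr (by rw [hx]; simp [hc])), ind_of_mem (hmc.1.mpr hc)]
    exact ⟨rfl, rfl⟩

lemma ind_lamswap_d (hc1 : c ∈ Y.1) (hc2 : c ∉ Y.2) (hd1 : d ∈ Y.2) (hd2 : d ∉ Y.1)
    (hN : SubZI N Y) :
    ind (lam Y (N.1 ∆ {c}, N.2 ∆ {d})).1 d = ind (lam Y N).2 d ∧
    ind (lam Y (N.1 ∆ {c}, N.2 ∆ {d})).2 d = ind (lam Y N).1 d := by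
  have hNΔ := swap_subZI hc1 hc2 hd1 hd2 hN
  have hmd := mem_lam_d hd1 hd2 hN
  have hmdΔ := mem_lam_d hd1 hd2 hNΔ
  have hx : (d ∈ N.2 ∆ {d}) ↔ d ∉ N.2 := by
    simp [Finset.mem_symmDiff, Finset.mem_singleton]
  rw [show (N.1 ∆ {c}, N.2 ∆ {d}).2 = N.2 ∆ {d} from rfl] at hmdΔ
  by_cases hd : d ∈ N.2
  · rw [ind_of_not_mem (by rw [hmdΔ.1, hx]; simp [hd]), ind_of_not_mem (by rw [hmd.2]; simp [hd]),
        ind_of_mem (hmdΔ.2.mpr (by rw [hx]; simp [hd])), ind_of_mem (hmd.1.mpr hd)]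
    exact ⟨rfl, rfl⟩
  · rw [ind_of_mem (hmdΔ.1.mpr (by rw [hx]; simp [hd])), ind_of_mem (hmd.2.mpr hd),
        ind_of_not_mem (by rw [hmdΔ.2, hx]; simp [hd]), ind_of_not_mem (by rw [hmd.1]; exact hd)]
    exact ⟨rfl, rfl⟩

end swapsec
lemma orient {c d : ℕ} (h : c ≠ d) :
    (max c d = c ∧ min c d = d) ∨ (max c d = d ∧ min c d = c) := by omega

section swapchar

variable {Y N : Symb} {c d : ℕ}

lemma swap_char_on (hc1 : c ∈ Y.1) (hc2 : c ∉ Y.2) (hd1 : d ∈ Y.2) (hd2 : d ∉ Y.1)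
    (hN : SubZI N Y) :
    ∀ v, min c d < v → v ≤ max c d →
      zcnt (lam Y (N.1 ∆ {c}, N.2 ∆ {d})).1 v
        = zcnt (lam Y N).1 v + (ind (lam Y N).2 (max c d) - ind (lam Y N).1 (max c d)) ∧
      zcnt (lam Y (N.1 ∆ {c}, N.2 ∆ {d})).2 v
        = zcnt (lam Y N).2 v + (ind (lam Y N).1 (max c d) - ind (lam Y N).2 (max c d)) := by
  have hcd : c ≠ d := fun h => hd2 (h ▸ hc1)
  intro v h1 h2
  obtain ⟨hs1, hs2⟩ := zcnt_swap hc1 hc2 hd1 hd2 hN v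
  rcases orient hcd with ⟨hy, hx⟩ | ⟨hy, hx⟩
  · rw [hy] at h2 ⊢; rw [hx] at h1
    rw [chi_le h2, chi_gt h1, mul_one, mul_zero] at hs1 hs2
    constructor <;> omega
  · rw [hy] at h2 ⊢; rw [hx] at h1
    rw [chi_le h2, chi_gt h1, mul_one, mul_zero] at hs1 hs2
    constructor <;> omega

lemma swap_char_off (hc1 : c ∈ Y.1) (hc2 : c ∉ Y.2) (hd1 : d ∈ Y.2) (hd2 : d ∉ Y.1)
    (hN : SubZI N Y)
    (htt : ind (lam Y N).1 c + ind (lam Y N).1 d = 1) :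
    ∀ v, ¬(min c d < v ∧ v ≤ max c d) →
      zcnt (lam Y (N.1 ∆ {c}, N.2 ∆ {d})).1 v = zcnt (lam Y N).1 v ∧
      zcnt (lam Y (N.1 ∆ {c}, N.2 ∆ {d})).2 v = zcnt (lam Y N).2 v := by
  intro v hv
  obtain ⟨hs1, hs2⟩ := zcnt_swap hc1 hc2 hd1 hd2 hN v
  have hsc := ind_lam_sum_c hc1 hc2 hN
  have hsd := ind_lam_sum_d hd1 hd2 hN
  rcases le_or_gt v (min c d) with h | h
  · rw [chi_le (by omega), chi_le (by omega), mul_one, mul_one] at hs1 hs2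
    constructor <;> omega
  · rw [chi_gt (by omega), chi_gt (by omega), mul_zero, mul_zero] at hs1 hs2
    constructor <;> omega

end swapchar

lemma coreA_mixed (x y : ℕ) (hxy : x < y)
    (A B C D iA iB iC iD : ℕ → ℤ)
    (stA : ∀ v, A v = A (v+1) + iA v) (stB : ∀ v, B v = B (v+1) + iB v)
    (stC : ∀ v, C v = C (v+1) + iC v) (stD : ∀ v, D v = D (v+1) + iD v)
    (rA : ∀ v, 0 ≤ iA v ∧ iA v ≤ 1) (rB : ∀ v, 0 ≤ iB v ∧ iB v ≤ 1)
    (rC : ∀ v, 0 ≤ iC v ∧ iC v ≤ 1) (rD : ∀ v, 0 ≤ iD v ∧ iD v ≤ 1)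
    (hint : ∀ v, x < v → v < y → iA v = 0 ∧ iB v = 0 ∧ iC v = 0 ∧ iD v = 0)
    (hyA : iA y = 0) (hyB : iB y = 0) (hyCD : iC y + iD y = 1) (hxCD : iC x + iD x = 1)
    (hEF : ∀ v, x < v → v ≤ y → A v + B v = C v + D v)
    (h : ∀ v, iA v ≤ A v - D v ∧ A v - D v ≤ 1 ∧ 0 ≤ C v - B v ∧ C v - B v ≤ 1 - iB v)
    (hmix : iD y = iD x) : False := by
  refine (coreA x y hxy A B C D
    (fun v => if x < v ∧ v ≤ y then C v + (iD y - iC y) else C v)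
    (fun v => if x < v ∧ v ≤ y then D v + (iC y - iD y) else D v)
    iA iB iC iD stA stB stC stD rA rB rC rD hint hyA hyB hyCD hxCD hEF h
    ?_ ?_ ?_ ?_).2 hmix
  · intro v hv; simp [hv]
  · intro v h1 h2; simp [h1, h2]
  · intro v hv; simp [hv]
  · intro v h1 h2; simp [h1, h2]

lemma coreB_mixed (x y : ℕ) (hxy : x < y)
    (A B C D iA iB iC iD : ℕ → ℤ)
    (stA : ∀ v, A v = A (v+1) + iA v) (stB : ∀ v, B v = B (v+1) + iB v)
    (stC : ∀ v, C v = C (v+1) + iC v) (stD : ∀ v, D v = D (v+1) + iD v)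
    (rA : ∀ v, 0 ≤ iA v ∧ iA v ≤ 1) (rB : ∀ v, 0 ≤ iB v ∧ iB v ≤ 1)
    (rC : ∀ v, 0 ≤ iC v ∧ iC v ≤ 1) (rD : ∀ v, 0 ≤ iD v ∧ iD v ≤ 1)
    (hint : ∀ v, x < v → v < y → iA v = 0 ∧ iB v = 0 ∧ iC v = 0 ∧ iD v = 0)
    (hyAB : iA y + iB y = 1) (hxAB : iA x + iB x = 1) (hxC : iC x = 0) (hxD : iD x = 0)
    (hEF : ∀ v, x < v → v ≤ y → A v + B v = C v + D v)
    (h : ∀ v, iA v ≤ A v - D v ∧ A v - D v ≤ 1 ∧ 0 ≤ C v - B v ∧ C v - B v ≤ 1 - iB v)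
    (hmix : iA y = iA x) : False := by
  refine (coreB x y hxy A B C D
    (fun v => if x < v ∧ v ≤ y then A v + (iB y - iA y) else A v)
    (fun v => if x < v ∧ v ≤ y then B v + (iA y - iB y) else B v)
    iA iB iC iD
    (fun v => if v = x ∨ v = y then iB v else iA v)
    (fun v => if v = x ∨ v = y then iA v else iB v)
    stA stB stC stD rA rB rC rD hint hyAB hxAB hxC hxD hEF h
    ?_ ?_ ?_ ?_ ?_ ?_ ?_ ?_ ?_ ?_).2 hmix
  · intro v hv; simp [hv]
  · intro v h1 h2; simp [h1, h2]
  · intro v hv; simp [hv]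
  · intro v h1 h2; simp [h1, h2]
  · intro v h1 h2; simp [h1, h2]
  · simp
  · simp
  · intro v h1 h2; simp [h1, h2]
  · simp
  · simp
lemma onedir_i (m m' : ℕ) (Z Z' : Symb)
    (hZ : IsSpecial1 Z m) (hZ' : IsSpecial0 Z' m')
    (c d : ℕ) (hcon : ConsecPair Z' c d)
    (hH : BbarPlus Z Z' m m' Z (lam Z' ({c}, {d})))
    (Λ : Symb) (hΛ : Λ ∈ Sbar Z) (N : Symb) (hN : SubZI N Z')
    (hL : BbarPlus Z Z' m m' Λ (lam Z' N)) :
    BbarPlus Z Z' m m' Λ (lam Z' (N.1 ∆ {c}, N.2 ∆ {d})) := by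
  obtain ⟨hcm, hdm, hbet0⟩ := hcon
  obtain ⟨hc1, hc2⟩ := Finset.mem_sdiff.mp hcm
  obtain ⟨hd1, hd2⟩ := Finset.mem_sdiff.mp hdm
  have hcd : c ≠ d := fun h => hd2 (h ▸ hc1)
  have hxy : min c d < max c d := by omega
  have hbet : ∀ v, min c d < v → v < max c d → (v ∈ Z'.1 ↔ v ∈ Z'.2) := by
    intro v h1 h2
    constructor
    · intro hm; by_contra hm2
      exact hbet0 v (Finset.mem_union_left _ (Finset.mem_sdiff.mpr ⟨hm, hm2⟩)) ⟨h1, h2⟩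
    · intro hm; by_contra hm2
      exact hbet0 v (Finset.mem_union_right _ (Finset.mem_sdiff.mpr ⟨hm, hm2⟩)) ⟨h1, h2⟩
  obtain ⟨M, hM, rfl⟩ := hΛ
  obtain ⟨_, _, hHd⟩ := hH
  obtain ⟨hLs, hLs', hLd⟩ := hL
  have hNΔ : SubZI (N.1 ∆ {c}, N.2 ∆ {d}) Z' := swap_subZI hc1 hc2 hd1 hd2 hN
  refine ⟨hLs, ⟨_, hNΔ, rfl⟩, ?_⟩
  have hUs := special1_cnt hZ
  have hVs := special0_cnt hZ'
  have hsc := ind_lam_sum_c hc1 hc2 hN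
  have hsd := ind_lam_sum_d hd1 hd2 hN
  have hon := swap_char_on hc1 hc2 hd1 hd2 hN
  have h0 : ¬(min c d < 0 ∧ 0 ≤ max c d) := by omega
  have hbc := ind_bounds (lam Z' N).1 c
  have hbc2 := ind_bounds (lam Z' N).2 c
  have hbd := ind_bounds (lam Z' N).1 d
  have hbd2 := ind_bounds (lam Z' N).2 d
  have hyCD : ind (lam Z' N).1 (max c d) + ind (lam Z' N).2 (max c d) = 1 := by
    rcases orient hcd with ⟨hy, _⟩ | ⟨hy, _⟩ <;> rw [hy]
    · exact hsc
    · exact hsd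
  have hxCD : ind (lam Z' N).1 (min c d) + ind (lam Z' N).2 (min c d) = 1 := by
    rcases orient hcd with ⟨_, hx⟩ | ⟨_, hx⟩ <;> rw [hx]
    · exact hsd
    · exact hsc
  rcases hLd with ⟨hmm, hBm⟩ | ⟨hmm, hBm1⟩
  · -- case m' = m
    rcases hHd with ⟨_, hBmH⟩ | ⟨hmm2, _⟩
    swap
    · exfalso; omega
    refine Or.inl ⟨hmm, ?_⟩
    rw [Bm_iff] at hBm ⊢
    have hNF := (Bm_iff _ _).mp hBmH
    obtain ⟨hP1, hintm, hymax1, hymax2⟩ :=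
      structA Z.1 Z.2 Z'.1 Z'.2 c d hc1 hc2 hd1 hd2 hbet hUs hVs hNF.2.2
    have hintc : ∀ v, min c d < v → v < max c d →
        ind (lam Z M).1 v = 0 ∧ ind (lam Z M).2 v = 0 ∧
        ind (lam Z' N).1 v = 0 ∧ ind (lam Z' N).2 v = 0 := by
      intro v h1 h2
      obtain ⟨n1, n2, n3, n4⟩ := hintm v h1 h2
      obtain ⟨m1, m2⟩ := not_mem_lam hM n1 n2
      obtain ⟨m3, m4⟩ := not_mem_lam hN n3 n4
      exact ⟨ind_of_not_mem m1, ind_of_not_mem m2, ind_of_not_mem m3, ind_of_not_mem m4⟩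
    have hymax := not_mem_lam hM hymax1 hymax2
    have hEF : ∀ v, min c d < v → v ≤ max c d →
        zcnt (lam Z M).1 v + zcnt (lam Z M).2 v
          = zcnt (lam Z' N).1 v + zcnt (lam Z' N).2 v := by
      intro v h1 h2
      rw [zcnt_lam_sum hM, zcnt_lam_sum hN]
      obtain ⟨e1, e2⟩ := hP1 v h1 h2
      omega
    by_cases hss : ind (lam Z' N).1 c + ind (lam Z' N).1 d = 1
    · have hoff := swap_char_off hc1 hc2 hd1 hd2 hN hss
      have hssy : ind (lam Z' N).2 (max c d) = ind (lam Z' N).1 (min c d) := by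
        rcases orient hcd with ⟨hy, hx⟩ | ⟨hy, hx⟩ <;> rw [hy, hx] <;> omega
      refine ⟨by rw [(hoff 0 h0).2]; exact hBm.1,
              by rw [(hoff 0 h0).1]; exact hBm.2.1, ?_⟩
      exact (coreA (min c d) (max c d) hxy
        (zcnt (lam Z M).1) (zcnt (lam Z M).2) (zcnt (lam Z' N).1) (zcnt (lam Z' N).2)
        (zcnt (lam Z' (N.1 ∆ {c}, N.2 ∆ {d})).1) (zcnt (lam Z' (N.1 ∆ {c}, N.2 ∆ {d})).2)
        (ind (lam Z M).1) (ind (lam Z M).2) (ind (lam Z' N).1) (ind (lam Z' N).2)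
        (cnt_step _) (cnt_step _) (cnt_step _) (cnt_step _)
        (ind_bounds _) (ind_bounds _) (ind_bounds _) (ind_bounds _)
        hintc (ind_of_not_mem hymax.1) (ind_of_not_mem hymax.2) hyCD hxCD hEF hBm.2.2
        (fun v hv => (hoff v hv).1) (fun v h1 h2 => (hon v h1 h2).1)
        (fun v hv => (hoff v hv).2) (fun v h1 h2 => (hon v h1 h2).2)).1 hssy
    · exfalso
      have hmix : ind (lam Z' N).2 (max c d) = ind (lam Z' N).2 (min c d) := by
        rcases orient hcd with ⟨hy, hx⟩ | ⟨hy, hx⟩ <;> rw [hy, hx] <;> omega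
      exact coreA_mixed (min c d) (max c d) hxy
        (zcnt (lam Z M).1) (zcnt (lam Z M).2) (zcnt (lam Z' N).1) (zcnt (lam Z' N).2)
        (ind (lam Z M).1) (ind (lam Z M).2) (ind (lam Z' N).1) (ind (lam Z' N).2)
        (cnt_step _) (cnt_step _) (cnt_step _) (cnt_step _)
        (ind_bounds _) (ind_bounds _) (ind_bounds _) (ind_bounds _)
        hintc (ind_of_not_mem hymax.1) (ind_of_not_mem hymax.2) hyCD hxCD hEF hBm.2.2 hmix
  · -- case m' = m + 1
    rcases hHd with ⟨hmm2, _⟩ | ⟨_, hBm1H⟩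
    · exfalso; omega
    refine Or.inr ⟨hmm, ?_⟩
    rw [Bm1_iff] at hBm1 ⊢
    have hNF := (Bm1_iff _ _).mp hBm1H
    obtain ⟨hP1, hintm, hxmin1, hxmin2⟩ :=
      structB Z'.1 Z'.2 Z.1 Z.2 c d hc1 hc2 hd1 hd2 hbet hVs hUs hNF.2.2
    have hintc : ∀ v, min c d < v → v < max c d →
        ind (lam Z' N).1 v = 0 ∧ ind (lam Z' N).2 v = 0 ∧
        ind (lam Z M).1 v = 0 ∧ ind (lam Z M).2 v = 0 := by
      intro v h1 h2
      obtain ⟨n1, n2, n3, n4⟩ := hintm v h1 h2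
      obtain ⟨m1, m2⟩ := not_mem_lam hN n1 n2
      obtain ⟨m3, m4⟩ := not_mem_lam hM n3 n4
      exact ⟨ind_of_not_mem m1, ind_of_not_mem m2, ind_of_not_mem m3, ind_of_not_mem m4⟩
    have hxmin := not_mem_lam hM hxmin1 hxmin2
    have hEF : ∀ v, min c d < v → v ≤ max c d →
        zcnt (lam Z' N).1 v + zcnt (lam Z' N).2 v
          = zcnt (lam Z M).1 v + zcnt (lam Z M).2 v := by
      intro v h1 h2
      rw [zcnt_lam_sum hM, zcnt_lam_sum hN]
      obtain ⟨e1, e2⟩ := hP1 v h1 h2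
      omega
    by_cases hss : ind (lam Z' N).1 c + ind (lam Z' N).1 d = 1
    · have hoff := swap_char_off hc1 hc2 hd1 hd2 hN hss
      have hssy : ind (lam Z' N).2 (max c d) = ind (lam Z' N).1 (min c d) := by
        rcases orient hcd with ⟨hy, hx⟩ | ⟨hy, hx⟩ <;> rw [hy, hx] <;> omega
      refine ⟨by rw [(hoff 0 h0).1]; exact hBm1.1,
              by rw [(hoff 0 h0).2]; exact hBm1.2.1, ?_⟩
      refine (coreB (min c d) (max c d) hxy
        (zcnt (lam Z' N).1) (zcnt (lam Z' N).2) (zcnt (lam Z M).1) (zcnt (lam Z M).2)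
        (zcnt (lam Z' (N.1 ∆ {c}, N.2 ∆ {d})).1) (zcnt (lam Z' (N.1 ∆ {c}, N.2 ∆ {d})).2)
        (ind (lam Z' N).1) (ind (lam Z' N).2) (ind (lam Z M).1) (ind (lam Z M).2)
        (ind (lam Z' (N.1 ∆ {c}, N.2 ∆ {d})).1) (ind (lam Z' (N.1 ∆ {c}, N.2 ∆ {d})).2)
        (cnt_step _) (cnt_step _) (cnt_step _) (cnt_step _)
        (ind_bounds _) (ind_bounds _) (ind_bounds _) (ind_bounds _)
        hintc hyCD hxCD (ind_of_not_mem hxmin.1) (ind_of_not_mem hxmin.2) hEF hBm1.2.2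
        (fun v hv => (hoff v hv).1) (fun v h1 h2 => (hon v h1 h2).1)
        (fun v hv => (hoff v hv).2) (fun v h1 h2 => (hon v h1 h2).2)
        ?_ ?_ ?_ ?_ ?_ ?_).1 hssy
      · intro v hv1 hv2
        rcases orient hcd with ⟨hy, hx⟩ | ⟨hy, hx⟩
        · exact (ind_lamswap_ne hN (by omega : v ≠ c) (by omega : v ≠ d)).1
        · exact (ind_lamswap_ne hN (by omega : v ≠ c) (by omega : v ≠ d)).1
      · rcases orient hcd with ⟨hy, hx⟩ | ⟨hy, hx⟩ <;> rw [hx]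
        · exact (ind_lamswap_d hc1 hc2 hd1 hd2 hN).1
        · exact (ind_lamswap_c hc1 hc2 hd1 hd2 hN).1
      · rcases orient hcd with ⟨hy, hx⟩ | ⟨hy, hx⟩ <;> rw [hy]
        · exact (ind_lamswap_c hc1 hc2 hd1 hd2 hN).1
        · exact (ind_lamswap_d hc1 hc2 hd1 hd2 hN).1
      · intro v hv1 hv2
        rcases orient hcd with ⟨hy, hx⟩ | ⟨hy, hx⟩
        · exact (ind_lamswap_ne hN (by omega : v ≠ c) (by omega : v ≠ d)).2
        · exact (ind_lamswap_ne hN (by omega : v ≠ c) (by omega : v ≠ d)).2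
      · rcases orient hcd with ⟨hy, hx⟩ | ⟨hy, hx⟩ <;> rw [hx]
        · exact (ind_lamswap_d hc1 hc2 hd1 hd2 hN).2
        · exact (ind_lamswap_c hc1 hc2 hd1 hd2 hN).2
      · rcases orient hcd with ⟨hy, hx⟩ | ⟨hy, hx⟩ <;> rw [hy]
        · exact (ind_lamswap_c hc1 hc2 hd1 hd2 hN).2
        · exact (ind_lamswap_d hc1 hc2 hd1 hd2 hN).2
    · exfalso
      have hmix : ind (lam Z' N).1 (max c d) = ind (lam Z' N).1 (min c d) := by
        rcases orient hcd with ⟨hy, hx⟩ | ⟨hy, hx⟩ <;> rw [hy, hx] <;> omega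
      exact coreB_mixed (min c d) (max c d) hxy
        (zcnt (lam Z' N).1) (zcnt (lam Z' N).2) (zcnt (lam Z M).1) (zcnt (lam Z M).2)
        (ind (lam Z' N).1) (ind (lam Z' N).2) (ind (lam Z M).1) (ind (lam Z M).2)
        (cnt_step _) (cnt_step _) (cnt_step _) (cnt_step _)
        (ind_bounds _) (ind_bounds _) (ind_bounds _) (ind_bounds _)
        hintc hyCD hxCD (ind_of_not_mem hxmin.1) (ind_of_not_mem hxmin.2) hEF hBm1.2.2 hmix
lemma onedir_ii (m m' : ℕ) (Z Z' : Symb)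
    (hZ : IsSpecial1 Z m) (hZ' : IsSpecial0 Z' m')
    (a b : ℕ) (hcon : ConsecPair Z a b)
    (hH : BbarPlus Z Z' m m' (lam Z ({a}, {b})) Z')
    (M : Symb) (hM : SubZI M Z) (Λ' : Symb) (hΛ' : Λ' ∈ Sbar Z')
    (hL : BbarPlus Z Z' m m' (lam Z M) Λ') :
    BbarPlus Z Z' m m' (lam Z (M.1 ∆ {a}, M.2 ∆ {b})) Λ' := by
  obtain ⟨hcm, hdm, hbet0⟩ := hcon
  obtain ⟨hc1, hc2⟩ := Finset.mem_sdiff.mp hcm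
  obtain ⟨hd1, hd2⟩ := Finset.mem_sdiff.mp hdm
  have hcd : a ≠ b := fun h => hd2 (h ▸ hc1)
  have hxy : min a b < max a b := by omega
  have hbet : ∀ v, min a b < v → v < max a b → (v ∈ Z.1 ↔ v ∈ Z.2) := by
    intro v h1 h2
    constructor
    · intro hm; by_contra hm2
      exact hbet0 v (Finset.mem_union_left _ (Finset.mem_sdiff.mpr ⟨hm, hm2⟩)) ⟨h1, h2⟩
    · intro hm; by_contra hm2
      exact hbet0 v (Finset.mem_union_right _ (Finset.mem_sdiff.mpr ⟨hm, hm2⟩)) ⟨h1, h2⟩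
  obtain ⟨N', hN', rfl⟩ := hΛ'
  obtain ⟨_, _, hHd⟩ := hH
  obtain ⟨hLs, hLs', hLd⟩ := hL
  have hMΔ : SubZI (M.1 ∆ {a}, M.2 ∆ {b}) Z := swap_subZI hc1 hc2 hd1 hd2 hM
  refine ⟨⟨_, hMΔ, rfl⟩, hLs', ?_⟩
  have hUs := special1_cnt hZ
  have hVs := special0_cnt hZ'
  have hsc := ind_lam_sum_c hc1 hc2 hM
  have hsd := ind_lam_sum_d hd1 hd2 hM
  have hon := swap_char_on hc1 hc2 hd1 hd2 hM
  have h0 : ¬(min a b < 0 ∧ 0 ≤ max a b) := by omega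
  have hbc := ind_bounds (lam Z M).1 a
  have hbc2 := ind_bounds (lam Z M).2 a
  have hbd := ind_bounds (lam Z M).1 b
  have hbd2 := ind_bounds (lam Z M).2 b
  have hyCD : ind (lam Z M).1 (max a b) + ind (lam Z M).2 (max a b) = 1 := by
    rcases orient hcd with ⟨hy, _⟩ | ⟨hy, _⟩ <;> rw [hy]
    · exact hsc
    · exact hsd
  have hxCD : ind (lam Z M).1 (min a b) + ind (lam Z M).2 (min a b) = 1 := by
    rcases orient hcd with ⟨_, hx⟩ | ⟨_, hx⟩ <;> rw [hx]
    · exact hsd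
    · exact hsc
  rcases hLd with ⟨hmm, hBm⟩ | ⟨hmm, hBm1⟩
  · -- case m' = m : coreB (swap in slots 1,2)
    rcases hHd with ⟨_, hBmH⟩ | ⟨hmm2, _⟩
    swap
    · exfalso; omega
    refine Or.inl ⟨hmm, ?_⟩
    rw [Bm_iff] at hBm ⊢
    have hNF := (Bm_iff _ _).mp hBmH
    obtain ⟨hP1, hintm, hxmin1, hxmin2⟩ :=
      structB Z.1 Z.2 Z'.1 Z'.2 a b hc1 hc2 hd1 hd2 hbet hUs hVs hNF.2.2
    have hintc : ∀ v, min a b < v → v < max a b →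
        ind (lam Z M).1 v = 0 ∧ ind (lam Z M).2 v = 0 ∧
        ind (lam Z' N').1 v = 0 ∧ ind (lam Z' N').2 v = 0 := by
      intro v h1 h2
      obtain ⟨n1, n2, n3, n4⟩ := hintm v h1 h2
      obtain ⟨m1, m2⟩ := not_mem_lam hM n1 n2
      obtain ⟨m3, m4⟩ := not_mem_lam hN' n3 n4
      exact ⟨ind_of_not_mem m1, ind_of_not_mem m2, ind_of_not_mem m3, ind_of_not_mem m4⟩
    have hxmin := not_mem_lam hN' hxmin1 hxmin2
    have hEF : ∀ v, min a b < v → v ≤ max a b →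
        zcnt (lam Z M).1 v + zcnt (lam Z M).2 v
          = zcnt (lam Z' N').1 v + zcnt (lam Z' N').2 v := by
      intro v h1 h2
      rw [zcnt_lam_sum hM, zcnt_lam_sum hN']
      obtain ⟨e1, e2⟩ := hP1 v h1 h2
      omega
    by_cases hss : ind (lam Z M).1 a + ind (lam Z M).1 b = 1
    · have hoff := swap_char_off hc1 hc2 hd1 hd2 hM hss
      have hssy : ind (lam Z M).2 (max a b) = ind (lam Z M).1 (min a b) := by
        rcases orient hcd with ⟨hy, hx⟩ | ⟨hy, hx⟩ <;> rw [hy, hx] <;> omega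
      refine ⟨by rw [(hoff 0 h0).1]; exact hBm.1,
              by rw [(hoff 0 h0).2]; exact hBm.2.1, ?_⟩
      refine (coreB (min a b) (max a b) hxy
        (zcnt (lam Z M).1) (zcnt (lam Z M).2) (zcnt (lam Z' N').1) (zcnt (lam Z' N').2)
        (zcnt (lam Z (M.1 ∆ {a}, M.2 ∆ {b})).1) (zcnt (lam Z (M.1 ∆ {a}, M.2 ∆ {b})).2)
        (ind (lam Z M).1) (ind (lam Z M).2) (ind (lam Z' N').1) (ind (lam Z' N').2)
        (ind (lam Z (M.1 ∆ {a}, M.2 ∆ {b})).1) (ind (lam Z (M.1 ∆ {a}, M.2 ∆ {b})).2)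
        (cnt_step _) (cnt_step _) (cnt_step _) (cnt_step _)
        (ind_bounds _) (ind_bounds _) (ind_bounds _) (ind_bounds _)
        hintc hyCD hxCD (ind_of_not_mem hxmin.1) (ind_of_not_mem hxmin.2) hEF hBm.2.2
        (fun v hv => (hoff v hv).1) (fun v h1 h2 => (hon v h1 h2).1)
        (fun v hv => (hoff v hv).2) (fun v h1 h2 => (hon v h1 h2).2)
        ?_ ?_ ?_ ?_ ?_ ?_).1 hssy
      · intro v hv1 hv2
        rcases orient hcd with ⟨hy, hx⟩ | ⟨hy, hx⟩
        · exact (ind_lamswap_ne hM (by omega : v ≠ a) (by omega : v ≠ b)).1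
        · exact (ind_lamswap_ne hM (by omega : v ≠ a) (by omega : v ≠ b)).1
      · rcases orient hcd with ⟨hy, hx⟩ | ⟨hy, hx⟩ <;> rw [hx]
        · exact (ind_lamswap_d hc1 hc2 hd1 hd2 hM).1
        · exact (ind_lamswap_c hc1 hc2 hd1 hd2 hM).1
      · rcases orient hcd with ⟨hy, hx⟩ | ⟨hy, hx⟩ <;> rw [hy]
        · exact (ind_lamswap_c hc1 hc2 hd1 hd2 hM).1
        · exact (ind_lamswap_d hc1 hc2 hd1 hd2 hM).1
      · intro v hv1 hv2
        rcases orient hcd with ⟨hy, hx⟩ | ⟨hy, hx⟩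
        · exact (ind_lamswap_ne hM (by omega : v ≠ a) (by omega : v ≠ b)).2
        · exact (ind_lamswap_ne hM (by omega : v ≠ a) (by omega : v ≠ b)).2
      · rcases orient hcd with ⟨hy, hx⟩ | ⟨hy, hx⟩ <;> rw [hx]
        · exact (ind_lamswap_d hc1 hc2 hd1 hd2 hM).2
        · exact (ind_lamswap_c hc1 hc2 hd1 hd2 hM).2
      · rcases orient hcd with ⟨hy, hx⟩ | ⟨hy, hx⟩ <;> rw [hy]
        · exact (ind_lamswap_c hc1 hc2 hd1 hd2 hM).2
        · exact (ind_lamswap_d hc1 hc2 hd1 hd2 hM).2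
    · exfalso
      have hmix : ind (lam Z M).1 (max a b) = ind (lam Z M).1 (min a b) := by
        rcases orient hcd with ⟨hy, hx⟩ | ⟨hy, hx⟩ <;> rw [hy, hx] <;> omega
      exact coreB_mixed (min a b) (max a b) hxy
        (zcnt (lam Z M).1) (zcnt (lam Z M).2) (zcnt (lam Z' N').1) (zcnt (lam Z' N').2)
        (ind (lam Z M).1) (ind (lam Z M).2) (ind (lam Z' N').1) (ind (lam Z' N').2)
        (cnt_step _) (cnt_step _) (cnt_step _) (cnt_step _)
        (ind_bounds _) (ind_bounds _) (ind_bounds _) (ind_bounds _)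
        hintc hyCD hxCD (ind_of_not_mem hxmin.1) (ind_of_not_mem hxmin.2) hEF hBm.2.2 hmix
  · -- case m' = m + 1 : coreA (swap in slots 3,4)
    rcases hHd with ⟨hmm2, _⟩ | ⟨_, hBm1H⟩
    · exfalso; omega
    refine Or.inr ⟨hmm, ?_⟩
    rw [Bm1_iff] at hBm1 ⊢
    have hNF := (Bm1_iff _ _).mp hBm1H
    obtain ⟨hP1, hintm, hymax1, hymax2⟩ :=
      structA Z'.1 Z'.2 Z.1 Z.2 a b hc1 hc2 hd1 hd2 hbet hVs hUs hNF.2.2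
    have hintc : ∀ v, min a b < v → v < max a b →
        ind (lam Z' N').1 v = 0 ∧ ind (lam Z' N').2 v = 0 ∧
        ind (lam Z M).1 v = 0 ∧ ind (lam Z M).2 v = 0 := by
      intro v h1 h2
      obtain ⟨n1, n2, n3, n4⟩ := hintm v h1 h2
      obtain ⟨m1, m2⟩ := not_mem_lam hN' n1 n2
      obtain ⟨m3, m4⟩ := not_mem_lam hM n3 n4
      exact ⟨ind_of_not_mem m1, ind_of_not_mem m2, ind_of_not_mem m3, ind_of_not_mem m4⟩
    have hymax := not_mem_lam hN' hymax1 hymax2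
    have hEF : ∀ v, min a b < v → v ≤ max a b →
        zcnt (lam Z' N').1 v + zcnt (lam Z' N').2 v
          = zcnt (lam Z M).1 v + zcnt (lam Z M).2 v := by
      intro v h1 h2
      rw [zcnt_lam_sum hM, zcnt_lam_sum hN']
      obtain ⟨e1, e2⟩ := hP1 v h1 h2
      omega
    by_cases hss : ind (lam Z M).1 a + ind (lam Z M).1 b = 1
    · have hoff := swap_char_off hc1 hc2 hd1 hd2 hM hss
      have hssy : ind (lam Z M).2 (max a b) = ind (lam Z M).1 (min a b) := by
        rcases orient hcd with ⟨hy, hx⟩ | ⟨hy, hx⟩ <;> rw [hy, hx] <;> omega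
      refine ⟨by rw [(hoff 0 h0).2]; exact hBm1.1,
              by rw [(hoff 0 h0).1]; exact hBm1.2.1, ?_⟩
      exact (coreA (min a b) (max a b) hxy
        (zcnt (lam Z' N').1) (zcnt (lam Z' N').2) (zcnt (lam Z M).1) (zcnt (lam Z M).2)
        (zcnt (lam Z (M.1 ∆ {a}, M.2 ∆ {b})).1) (zcnt (lam Z (M.1 ∆ {a}, M.2 ∆ {b})).2)
        (ind (lam Z' N').1) (ind (lam Z' N').2) (ind (lam Z M).1) (ind (lam Z M).2)
        (cnt_step _) (cnt_step _) (cnt_step _) (cnt_step _)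
        (ind_bounds _) (ind_bounds _) (ind_bounds _) (ind_bounds _)
        hintc (ind_of_not_mem hymax.1) (ind_of_not_mem hymax.2) hyCD hxCD hEF hBm1.2.2
        (fun v hv => (hoff v hv).1) (fun v h1 h2 => (hon v h1 h2).1)
        (fun v hv => (hoff v hv).2) (fun v h1 h2 => (hon v h1 h2).2)).1 hssy
    · exfalso
      have hmix : ind (lam Z M).2 (max a b) = ind (lam Z M).2 (min a b) := by
        rcases orient hcd with ⟨hy, hx⟩ | ⟨hy, hx⟩ <;> rw [hy, hx] <;> omega
      exact coreA_mixed (min a b) (max a b) hxy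
        (zcnt (lam Z' N').1) (zcnt (lam Z' N').2) (zcnt (lam Z M).1) (zcnt (lam Z M).2)
        (ind (lam Z' N').1) (ind (lam Z' N').2) (ind (lam Z M).1) (ind (lam Z M).2)
        (cnt_step _) (cnt_step _) (cnt_step _) (cnt_step _)
        (ind_bounds _) (ind_bounds _) (ind_bounds _) (ind_bounds _)
        hintc (ind_of_not_mem hymax.1) (ind_of_not_mem hymax.2) hyCD hxCD hEF hBm1.2.2 hmix
theorem stmt5 (m m' : ℕ) (Z Z' : Symb) (hm : m' = m ∨ m' = m + 1)
    (hZ : IsSpecial1 Z m) (hZ' : IsSpecial0 Z' m')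
    (hD : ∃ A A' : Symb, DRel Z Z' m m' A A') :
    (∀ c d : ℕ, ConsecPair Z' c d → DRel Z Z' m m' Z (lam Z' ({c}, {d})) →
      ∀ Λ ∈ Sbar Z, ∀ N : Symb, SubZI N Z' →
        (BbarPlus Z Z' m m' Λ (lam Z' N) ↔
         BbarPlus Z Z' m m' Λ (lam Z' (N.1 ∆ {c}, N.2 ∆ {d})))) ∧
    (∀ a b : ℕ, ConsecPair Z a b → DRel Z Z' m m' (lam Z ({a}, {b})) Z' →
      ∀ M : Symb, SubZI M Z → ∀ Λ' ∈ Sbar Z',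
        (BbarPlus Z Z' m m' (lam Z M) Λ' ↔
         BbarPlus Z Z' m m' (lam Z (M.1 ∆ {a}, M.2 ∆ {b})) Λ')) := by
  constructor
  · intro c d hcons hDrel Λ hΛ N hN
    obtain ⟨hc1, hc2⟩ := Finset.mem_sdiff.mp hcons.1
    obtain ⟨hd1, hd2⟩ := Finset.mem_sdiff.mp hcons.2.1
    constructor
    · intro h
      exact onedir_i m m' Z Z' hZ hZ' c d hcons hDrel.1 Λ hΛ N hN h
    · intro h
      have h2 := onedir_i m m' Z Z' hZ hZ' c d hcons hDrel.1 Λ hΛ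
        (N.1 ∆ {c}, N.2 ∆ {d}) (swap_subZI hc1 hc2 hd1 hd2 hN) h
      have e : ((N.1 ∆ {c}, N.2 ∆ {d}).1 ∆ {c}, (N.1 ∆ {c}, N.2 ∆ {d}).2 ∆ {d}) = N := by
        rw [show (N.1 ∆ {c}, N.2 ∆ {d}).1 = N.1 ∆ {c} from rfl,
            show (N.1 ∆ {c}, N.2 ∆ {d}).2 = N.2 ∆ {d} from rfl,
            symmDiff_symmDiff_cancel_right, symmDiff_symmDiff_cancel_right]
      rwa [e] at h2
  · intro a b hcons hDrel M hM Λ' hΛ'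
    obtain ⟨hc1, hc2⟩ := Finset.mem_sdiff.mp hcons.1
    obtain ⟨hd1, hd2⟩ := Finset.mem_sdiff.mp hcons.2.1
    constructor
    · intro h
      exact onedir_ii m m' Z Z' hZ hZ' a b hcons hDrel.1 M hM Λ' hΛ' h
    · intro h
      have h2 := onedir_ii m m' Z Z' hZ hZ' a b hcons hDrel.1
        (M.1 ∆ {a}, M.2 ∆ {b}) (swap_subZI hc1 hc2 hd1 hd2 hM) Λ' hΛ' h
      have e : ((M.1 ∆ {a}, M.2 ∆ {b}).1 ∆ {a}, (M.1 ∆ {a}, M.2 ∆ {b}).2 ∆ {b}) = M := by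
        rw [show (M.1 ∆ {a}, M.2 ∆ {b}).1 = M.1 ∆ {a} from rfl,
            show (M.1 ∆ {a}, M.2 ∆ {b}).2 = M.2 ∆ {b} from rfl,
            symmDiff_symmDiff_cancel_right, symmDiff_symmDiff_cancel_right]
      rwa [e] at h2
end

section
/- Let Z = (a_1,…,a_{m+1}; b_1,…,b_m) be a special symbol of defect 1 and Z' = (c_1,…,c_{m'}; d_1,…,d_{m'}) a special symbol of defect 0 with m' = m or m' = m+1. Then: (i) if m' = m+1, Z' is regular and D_Z = {Z'}, then c_i > a_i and d_i > b_i for every index i for which both entries exist; (ii) if m' = m, Z is regular and D_{Z'} = {Z}, then a_i > c_i and b_i > d_i for every index i for which both entries exist. -/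
open scoped symmDiff

lemma mem_rowList {s : Finset ℕ} {x : ℕ} : x ∈ rowList s ↔ x ∈ s := by
  simp [rowList]

lemma rowList_eq_of_sorted {L : List ℕ} (h : L.Pairwise (· > ·)) :
    rowList L.toFinset = L := by
  have hnd : L.reverse.Nodup := by rw [List.nodup_reverse]; exact h.nodup
  have hs2 : L.reverse.Pairwise (· ≤ ·) := by
    rw [List.pairwise_reverse]
    exact h.imp (fun h => le_of_lt h)
  have h2 := (List.toFinset_sort (α := ℕ) (· ≤ ·) hnd).mpr hs2
  rw [List.toFinset_reverse] at h2
  unfold rowList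
  rw [h2, List.reverse_reverse]

lemma sorted_set {L : List ℕ} (hL : L.Pairwise (· > ·)) {j y : ℕ} (hj : j < L.length)
    (h1 : ∀ (h : j + 1 < L.length), y > L[j+1])
    (h2 : ∀ (h : 1 ≤ j), L[j-1]'(by omega) > y) :
    (L.set j y).Pairwise (· > ·) := by
  have hmono : ∀ i k (hik : i < k) (hk : k < L.length), L[k] < L[i]'(lt_trans hik hk) :=
    fun i k hik hk => List.pairwise_iff_getElem.mp hL i k _ hk hik
  rw [List.pairwise_iff_getElem]
  intro i k hi hk hik
  rw [List.length_set] at hi hk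
  rw [List.getElem_set, List.getElem_set]
  rcases eq_or_ne j i with rfl | hji
  · rw [if_pos rfl, if_neg (by omega)]
    have h3 := h1 (by omega)
    rcases eq_or_ne (j+1) k with rfl | hk2
    · exact h3
    · exact lt_trans (hmono _ _ (by omega) hk) h3
  · rw [if_neg hji]
    rcases eq_or_ne j k with rfl | hjk
    · rw [if_pos rfl]
      have h3 := h2 (by omega)
      rcases eq_or_ne (j-1) i with h4 | h4
      · subst h4; exact h3
      · exact lt_trans h3 (hmono _ _ (by omega) (by omega))
    · rw [if_neg hjk]
      exact hmono _ _ hik hk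

lemma toFinset_set {L : List ℕ} (hnd : L.Nodup) {j y : ℕ} (hj : j < L.length)
    (hy : y ∉ L) : (L.set j y).toFinset = insert y (L.toFinset.erase L[j]) := by
  ext a
  simp only [List.mem_toFinset, Finset.mem_insert, Finset.mem_erase, List.mem_toFinset]
  constructor
  · intro ha
    rw [List.mem_iff_getElem] at ha
    obtain ⟨i, hi, hia⟩ := ha
    rw [List.length_set] at hi
    rw [List.getElem_set] at hia
    rcases eq_or_ne j i with rfl | hji
    · rw [if_pos rfl] at hia; exact Or.inl hia.symm
    · rw [if_neg hji] at hia
      right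
      refine ⟨?_, hia ▸ List.getElem_mem hi⟩
      intro h
      exact hji (hnd.getElem_inj_iff.mp (by rw [hia, h]))
  · rintro (rfl | ⟨hne, ha⟩)
    · rw [List.mem_iff_getElem]
      exact ⟨j, by rw [List.length_set]; exact hj, by rw [List.getElem_set, if_pos rfl]⟩
    · rw [List.mem_iff_getElem] at ha
      obtain ⟨i, hi, hia⟩ := ha
      have hij : j ≠ i := by rintro rfl; exact hne hia.symm
      rw [List.mem_iff_getElem]
      exact ⟨i, by rw [List.length_set]; exact hi,
        by rw [List.getElem_set, if_neg hij]; exact hia⟩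

lemma rowList_swap {s : Finset ℕ} {j y : ℕ} (hj : j < (rowList s).length)
    (hy : y ∉ s) (hsort : ((rowList s).set j y).Pairwise (· > ·)) :
    rowList (insert y (s.erase (rowList s)[j])) = (rowList s).set j y := by
  have hnd : (rowList s).Nodup := (rowList_sorted s).nodup
  have hts : (rowList s).toFinset = s := by ext a; rw [List.mem_toFinset, mem_rowList]
  have h1 := rowList_eq_of_sorted hsort
  rwa [toFinset_set hnd hj (fun h => hy (mem_rowList.mp h)), hts] at h1

/-- The `i`-th entry of `rowList s`, with default `0`. -/
def gD (s : Finset ℕ) (i : ℕ) : ℕ := (rowList s).getD i 0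

lemma gD_eq_getElem {s : Finset ℕ} {i : ℕ} (h : i < (rowList s).length) :
    gD s i = (rowList s)[i] := List.getD_eq_getElem _ 0 h

lemma gD_mem {s : Finset ℕ} {i : ℕ} (h : i < s.card) : gD s i ∈ s := by
  have h' : i < (rowList s).length := by rwa [rowList_length]
  rw [gD_eq_getElem h']
  exact mem_rowList.mp (List.getElem_mem h')

lemma oRel_ent_iff {r : ℕ → ℕ → Prop} {s t : Finset ℕ} {i j : ℕ} :
    oRel r (ent s i) (ent t j) ↔ (i < s.card → j < t.card → r (gD s i) (gD t j)) := by
  unfold ent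
  rcases Nat.lt_or_ge i (rowList s).length with h1 | h1
  · rcases Nat.lt_or_ge j (rowList t).length with h2 | h2
    · rw [List.getElem?_eq_getElem h1, List.getElem?_eq_getElem h2]
      show r _ _ ↔ _
      rw [gD_eq_getElem h1, gD_eq_getElem h2]
      constructor
      · exact fun h _ _ => h
      · exact fun h => h (by rwa [rowList_length] at h1) (by rwa [rowList_length] at h2)
    · rw [List.getElem?_eq_none h2]
      have : ¬ j < t.card := by rw [← rowList_length]; omega
      constructor
      · intro _ _ hj; exact absurd hj this
      · intro _
        cases (rowList s)[i]? <;> trivial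
  · rw [List.getElem?_eq_none h1]
    have : ¬ i < s.card := by rw [← rowList_length]; omega
    constructor
    · intro _ hi; exact absurd hi this
    · intro _; trivial

lemma self_mem_Sbar (Z : Symb) : Z ∈ Sbar Z := by
  refine ⟨(∅, ∅), ⟨Finset.empty_subset _, Finset.empty_subset _⟩, ?_⟩
  simp [lam]

lemma swap_mem_Sbar {Z : Symb} {x y : ℕ} (hx : x ∈ Z.1) (hx2 : x ∉ Z.2)
    (hy : y ∈ Z.2) (hy2 : y ∉ Z.1) :
    (insert y (Z.1.erase x), insert x (Z.2.erase y)) ∈ Sbar Z := by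
  refine ⟨({x}, {y}), ⟨?_, ?_⟩, ?_⟩
  · simp [Finset.singleton_subset_iff, hx, hx2]
  · simp [Finset.singleton_subset_iff, hy, hy2]
  · unfold lam
    rw [Finset.sdiff_singleton_eq_erase, Finset.sdiff_singleton_eq_erase]
    simp [Finset.union_singleton]

lemma gD_swap {s : Finset ℕ} {j y : ℕ} (hj : j < s.card) (hy : y ∉ s)
    (h1 : j + 1 < s.card → y > gD s (j+1))
    (h2 : 1 ≤ j → gD s (j-1) > y) :
    (insert y (s.erase (gD s j))).card = s.card ∧
    ∀ i, i < s.card → gD (insert y (s.erase (gD s j))) i = if j = i then y else gD s i := by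
  have hj' : j < (rowList s).length := by rwa [rowList_length]
  have hsort : ((rowList s).set j y).Pairwise (· > ·) := by
    refine sorted_set (rowList_sorted s) hj' (fun h => ?_) (fun h => ?_)
    · rw [← gD_eq_getElem h]; exact h1 (by rwa [← rowList_length])
    · rw [← gD_eq_getElem (by omega)]; exact h2 h
  have hrow : rowList (insert y (s.erase (gD s j))) = (rowList s).set j y := by
    rw [gD_eq_getElem hj']
    exact rowList_swap hj' hy hsort
  constructor
  · rw [← rowList_length, hrow, List.length_set, rowList_length]
  · intro i hi
    have hi' : i < ((rowList s).set j y).length := by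
      rw [List.length_set]; rwa [rowList_length]
    rw [gD, hrow, List.getD_eq_getElem _ 0 hi', List.getElem_set]
    split
    · rfl
    · exact (gD_eq_getElem (by rwa [List.length_set] at hi')).symm

theorem stmt8 (m m' : ℕ) (Z Z' : Symb) (hm : m' = m ∨ m' = m + 1)
    (hZ : IsSpecial1 Z m) (hZ' : IsSpecial0 Z' m') :
    (m' = m + 1 → Regular Z' → {Λ' | DRel Z Z' m m' Z Λ'} = {Z'} →
      ∀ i, oRel (· > ·) (ent Z'.1 i) (ent Z.1 i) ∧
        oRel (· > ·) (ent Z'.2 i) (ent Z.2 i)) ∧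
    (m' = m → Regular Z → {Λ | DRel Z Z' m m' Λ Z'} = {Z} →
      ∀ i, oRel (· > ·) (ent Z.1 i) (ent Z'.1 i) ∧
        oRel (· > ·) (ent Z.2 i) (ent Z'.2 i)) := by

  obtain ⟨hZc1, hZc2, hZ12, hZ21⟩ := hZ
  obtain ⟨hZ'c1, hZ'c2, hZ'12, hZ'21⟩ := hZ'
  constructor
  · -- Part (i): m' = m + 1
    intro hm1 hreg hset
    subst hm1
    have hab : ∀ i, i < m → gD Z.1 i ≥ gD Z.2 i := fun i h =>
      oRel_ent_iff.mp (hZ12 i) (by rw [hZc1]; omega) (by rw [hZc2]; omega)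
    have hba : ∀ i, i + 1 < m + 1 → gD Z.2 i ≥ gD Z.1 (i+1) := fun i h =>
      oRel_ent_iff.mp (hZ21 i) (by rw [hZc2]; omega) (by rw [hZc1]; omega)
    have hcd : ∀ i, i < m + 1 → gD Z'.1 i > gD Z'.2 i := by
      intro i h
      have h1 := oRel_ent_iff.mp (hZ'12 i) (by rw [hZ'c1]; omega) (by rw [hZ'c2]; omega)
      have h2 : gD Z'.1 i ≠ gD Z'.2 i := by
        intro he
        have ht := gD_mem (s := Z'.2) (i := i) (by rw [hZ'c2]; omega)
        rw [← he] at ht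
        exact Finset.disjoint_left.mp hreg (gD_mem (by rw [hZ'c1]; omega)) ht
      omega
    have hdc : ∀ i, i + 1 < m + 1 → gD Z'.2 i > gD Z'.1 (i+1) := by
      intro i h
      have h1 := oRel_ent_iff.mp (hZ'21 i) (by rw [hZ'c2]; omega) (by rw [hZ'c1]; omega)
      have h2 : gD Z'.2 i ≠ gD Z'.1 (i+1) := by
        intro he
        have ht := gD_mem (s := Z'.1) (i := i+1) (by rw [hZ'c1]; omega)
        rw [← he] at ht
        exact Finset.disjoint_left.mp hreg ht (gD_mem (by rw [hZ'c2]; omega))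
      omega
    have hmem : DRel Z Z' m (m+1) Z Z' := by
      have h0 : Z' ∈ ({Z'} : Set Symb) := rfl
      rw [← hset] at h0; exact h0
    obtain ⟨⟨-, -, hor⟩, -, -, -, -⟩ := hmem
    have hB : Bm1 Z Z' := by
      rcases hor with ⟨he, -⟩ | ⟨-, h⟩
      · omega
      · exact h
    obtain ⟨-, -, hb1, hb2, hb3, hb4⟩ := hB
    have had : ∀ i, i < m + 1 → gD Z.1 i ≥ gD Z'.2 i := fun i h =>
      oRel_ent_iff.mp (hb1 i) (by rw [hZc1]; omega) (by rw [hZ'c2]; omega)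
    have hda : ∀ i, i + 1 < m + 1 → gD Z'.2 i > gD Z.1 (i+1) := fun i h =>
      oRel_ent_iff.mp (hb2 i) (by rw [hZ'c2]; omega) (by rw [hZc1]; omega)
    have hbc : ∀ i, i < m → gD Z.2 i ≥ gD Z'.1 (i+1) := fun i h =>
      oRel_ent_iff.mp (hb3 i) (by rw [hZc2]; omega) (by rw [hZ'c1]; omega)
    have hcb : ∀ i, i < m → gD Z'.1 i > gD Z.2 i := fun i h =>
      oRel_ent_iff.mp (hb4 i) (by rw [hZ'c1]; omega) (by rw [hZc2]; omega)
    have key : ∀ j, (j < m + 1 → gD Z'.1 j > gD Z.1 j) ∧ (j < m → gD Z'.2 j > gD Z.2 j) := by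
      by_contra hcon
      obtain ⟨j0, hj0⟩ := not_forall.mp hcon
      classical
      have hP0 : (2*j0 % 2 = 0 ∧ 2*j0/2 < m+1 ∧ gD Z'.1 (2*j0/2) ≤ gD Z.1 (2*j0/2)) ∨
          (2*j0 % 2 = 1 ∧ 2*j0/2 < m ∧ gD Z'.2 (2*j0/2) ≤ gD Z.2 (2*j0/2)) ∨
          ((2*j0+1) % 2 = 0 ∧ (2*j0+1)/2 < m+1 ∧ gD Z'.1 ((2*j0+1)/2) ≤ gD Z.1 ((2*j0+1)/2)) ∨
          ((2*j0+1) % 2 = 1 ∧ (2*j0+1)/2 < m ∧ gD Z'.2 ((2*j0+1)/2) ≤ gD Z.2 ((2*j0+1)/2)) := by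
        rw [not_and_or] at hj0
        have e1 : 2*j0/2 = j0 := by omega
        have e2 : (2*j0+1)/2 = j0 := by omega
        rcases hj0 with h | h
        · push_neg at h
          exact Or.inl ⟨by omega, by rw [e1]; exact h.1, by rw [e1]; exact h.2⟩
        · push_neg at h
          exact Or.inr (Or.inr (Or.inr ⟨by omega, by rw [e2]; exact h.1, by rw [e2]; exact h.2⟩))
      have hex : ∃ n, n ≤ 2*m+1 ∧
          ((n % 2 = 0 ∧ n/2 < m+1 ∧ gD Z'.1 (n/2) ≤ gD Z.1 (n/2)) ∨
           (n % 2 = 1 ∧ n/2 < m ∧ gD Z'.2 (n/2) ≤ gD Z.2 (n/2))) ∧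
          ∀ k, k ≤ 2*m+1 →
            ((k % 2 = 0 ∧ k/2 < m+1 ∧ gD Z'.1 (k/2) ≤ gD Z.1 (k/2)) ∨
             (k % 2 = 1 ∧ k/2 < m ∧ gD Z'.2 (k/2) ≤ gD Z.2 (k/2))) → k ≤ n := by
        set Q : ℕ → Prop := fun n =>
          (n % 2 = 0 ∧ n/2 < m+1 ∧ gD Z'.1 (n/2) ≤ gD Z.1 (n/2)) ∨
          (n % 2 = 1 ∧ n/2 < m ∧ gD Z'.2 (n/2) ≤ gD Z.2 (n/2)) with hQ
        have hwit : ∃ n0, n0 ≤ 2*m+1 ∧ Q n0 := by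
          rcases hP0 with h | h | h | h
          · exact ⟨2*j0, by omega, Or.inl h⟩
          · exact ⟨2*j0, by omega, Or.inr h⟩
          · exact ⟨2*j0+1, by have := h.2.1; omega, Or.inl h⟩
          · exact ⟨2*j0+1, by have := h.2.1; omega, Or.inr h⟩
        obtain ⟨n0, hn0, hQn0⟩ := hwit
        refine ⟨Nat.findGreatest Q (2*m+1), Nat.findGreatest_le _,
          Nat.findGreatest_spec hn0 hQn0, fun k hk hQk => ?_⟩
        by_contra hlt
        exact Nat.findGreatest_is_greatest
          (show Nat.findGreatest Q (2*m+1) < k by omega) hk hQk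
      obtain ⟨n, hnlt, hPn, hmax⟩ := hex
      rcases hPn with ⟨hpar, hjlt, hle⟩ | ⟨hpar, hjlt, hle⟩
      · -- Case A : c j ≤ a j with j := n/2
        set j := n / 2 with hjdef
        have hjn : n = 2*j := by omega
        have hnotB : j < m → gD Z.2 j < gD Z'.2 j := by
          intro hjm
          by_contra hge
          push_neg at hge
          have e : (2*j+1)/2 = j := by omega
          have := hmax (2*j+1) (by omega)
            (Or.inr ⟨by omega, by rw [e]; exact hjm, by rw [e]; exact hge⟩)
          omega
        obtain ⟨hcard1, hgd1⟩ := gD_swap (s := Z'.1) (j := j) (y := gD Z'.2 j)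
          (by rw [hZ'c1]; omega)
          (fun hmem => Finset.disjoint_left.mp hreg hmem (gD_mem (by rw [hZ'c2]; omega)))
          (by intro h; rw [hZ'c1] at h; exact hdc j h)
          (by intro h
              have e : j - 1 + 1 = j := by omega
              have q1 := hcd (j-1) (by omega)
              have q2 := hdc (j-1) (by omega)
              rw [e] at q2
              have q3 := hcd j (by omega)
              omega)
        obtain ⟨hcard2, hgd2⟩ := gD_swap (s := Z'.2) (j := j) (y := gD Z'.1 j)
          (by rw [hZ'c2]; omega)
          (fun hmem => Finset.disjoint_left.mp hreg (gD_mem (by rw [hZ'c1]; omega)) hmem)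
          (by intro h; rw [hZ'c2] at h
              have q1 := hcd j (by omega)
              have q2 := hdc j (by omega)
              have q3 := hcd (j+1) (by omega)
              omega)
          (by intro h
              have e : j - 1 + 1 = j := by omega
              have q2 := hdc (j-1) (by omega)
              rw [e] at q2
              exact q2)
        set Λ : Symb := (insert (gD Z'.2 j) (Z'.1.erase (gD Z'.1 j)),
                         insert (gD Z'.1 j) (Z'.2.erase (gD Z'.2 j))) with hΛdef
        have hDR : DRel Z Z' m (m+1) Z Λ := by
          refine ⟨⟨self_mem_Sbar Z,
            swap_mem_Sbar (gD_mem (by rw [hZ'c1]; omega))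
              (fun hc => Finset.disjoint_left.mp hreg (gD_mem (by rw [hZ'c1]; omega)) hc)
              (gD_mem (by rw [hZ'c2]; omega))
              (fun hc => Finset.disjoint_left.mp hreg hc (gD_mem (by rw [hZ'c2]; omega))),
            Or.inr ⟨rfl, ?_, ?_, ?_, ?_, ?_, ?_⟩⟩, hZc1, hZc2,
            by rw [show Λ.1.card = Z'.1.card from hcard1, hZ'c1],
            by rw [show Λ.2.card = Z'.2.card from hcard2, hZ'c2]⟩
          · rw [show Λ.1.card = Z'.1.card from hcard1, hZ'c1, hZc2]
          · rw [show Λ.2.card = Z'.2.card from hcard2, hZ'c2, hZc1]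
          · -- a i ≥ gD Λ.2 i
            intro i
            rw [oRel_ent_iff]
            intro h1 h2
            rw [hZc1] at h1
            rw [show Λ.2.card = Z'.2.card from hcard2, hZ'c2] at h2
            rw [hgd2 i (by rw [hZ'c2]; omega)]
            split_ifs with hji
            · subst hji; exact hle
            · exact had i h1
          · -- gD Λ.2 i > a (i+1)
            intro i
            rw [oRel_ent_iff]
            intro h1 h2
            rw [show Λ.2.card = Z'.2.card from hcard2, hZ'c2] at h1
            rw [hZc1] at h2
            rw [hgd2 i (by rw [hZ'c2]; omega)]
            split_ifs with hji
            · subst hji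
              have q1 := hcd j (by omega)
              have q2 := hda j (by omega)
              omega
            · exact hda i (by omega)
          · -- b i ≥ gD Λ.1 (i+1)
            intro i
            rw [oRel_ent_iff]
            intro h1 h2
            rw [hZc2] at h1
            rw [show Λ.1.card = Z'.1.card from hcard1, hZ'c1] at h2
            rw [hgd1 (i+1) (by rw [hZ'c1]; omega)]
            split_ifs with hji
            · have hij : i = j - 1 := by omega
              have e : j - 1 + 1 = j := by omega
              subst hij
              have q1 := hba (j-1) (by omega)
              rw [e] at q1
              have q2 := had j (by omega)
              omega
            · exact hbc i h1
          · -- gD Λ.1 i > b i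
            intro i
            rw [oRel_ent_iff]
            intro h1 h2
            rw [show Λ.1.card = Z'.1.card from hcard1, hZ'c1] at h1
            rw [hZc2] at h2
            rw [hgd1 i (by rw [hZ'c1]; omega)]
            split_ifs with hji
            · subst hji; exact hnotB h2
            · exact hcb i h2
        have hΛZ' : Λ = Z' := by
          have h0 : Λ ∈ {Λ' | DRel Z Z' m (m+1) Z Λ'} := hDR
          rw [hset] at h0; exact h0
        have hymem : gD Z'.2 j ∈ Λ.1 := Finset.mem_insert_self _ _
        rw [hΛZ'] at hymem
        exact Finset.disjoint_left.mp hreg hymem (gD_mem (by rw [hZ'c2]; omega))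
      · -- Case B : d j ≤ b j with j := n/2
        set j := n / 2 with hjdef
        have hjn : n = 2*j+1 := by omega
        have hAc : gD Z.1 (j+1) < gD Z'.1 (j+1) := by
          by_contra hge
          push_neg at hge
          have e : (2*(j+1))/2 = j+1 := by omega
          have := hmax (2*(j+1)) (by omega)
            (Or.inl ⟨by omega, by rw [e]; omega, by rw [e]; exact hge⟩)
          omega
        obtain ⟨hcard1, hgd1⟩ := gD_swap (s := Z'.1) (j := j+1) (y := gD Z'.2 j)
          (by rw [hZ'c1]; omega)
          (fun hmem => Finset.disjoint_left.mp hreg hmem (gD_mem (by rw [hZ'c2]; omega)))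
          (by intro h; rw [hZ'c1] at h
              have q1 := hdc j (by omega)
              have q2 := hcd (j+1) (by omega)
              have q3 := hdc (j+1) (by omega)
              omega)
          (by intro h
              have e : j + 1 - 1 = j := by omega
              rw [e]
              exact hcd j (by omega))
        obtain ⟨hcard2, hgd2⟩ := gD_swap (s := Z'.2) (j := j) (y := gD Z'.1 (j+1))
          (by rw [hZ'c2]; omega)
          (fun hmem => Finset.disjoint_left.mp hreg (gD_mem (by rw [hZ'c1]; omega)) hmem)
          (by intro h; rw [hZ'c2] at h; exact hcd (j+1) (by omega))
          (by intro h
              have e : j - 1 + 1 = j := by omega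
              have q1 := hdc (j-1) (by omega)
              rw [e] at q1
              have q2 := hcd j (by omega)
              have q3 := hdc j (by omega)
              omega)
        set Λ : Symb := (insert (gD Z'.2 j) (Z'.1.erase (gD Z'.1 (j+1))),
                         insert (gD Z'.1 (j+1)) (Z'.2.erase (gD Z'.2 j))) with hΛdef
        have hDR : DRel Z Z' m (m+1) Z Λ := by
          refine ⟨⟨self_mem_Sbar Z,
            swap_mem_Sbar (gD_mem (by rw [hZ'c1]; omega))
              (fun hc => Finset.disjoint_left.mp hreg (gD_mem (by rw [hZ'c1]; omega)) hc)
              (gD_mem (by rw [hZ'c2]; omega))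
              (fun hc => Finset.disjoint_left.mp hreg hc (gD_mem (by rw [hZ'c2]; omega))),
            Or.inr ⟨rfl, ?_, ?_, ?_, ?_, ?_, ?_⟩⟩, hZc1, hZc2,
            by rw [show Λ.1.card = Z'.1.card from hcard1, hZ'c1],
            by rw [show Λ.2.card = Z'.2.card from hcard2, hZ'c2]⟩
          · rw [show Λ.1.card = Z'.1.card from hcard1, hZ'c1, hZc2]
          · rw [show Λ.2.card = Z'.2.card from hcard2, hZ'c2, hZc1]
          · -- a i ≥ gD Λ.2 i
            intro i
            rw [oRel_ent_iff]
            intro h1 h2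
            rw [hZc1] at h1
            rw [show Λ.2.card = Z'.2.card from hcard2, hZ'c2] at h2
            rw [hgd2 i (by rw [hZ'c2]; omega)]
            split_ifs with hji
            · subst hji
              have q1 := hab j hjlt
              have q2 := hbc j hjlt
              omega
            · exact had i h1
          · -- gD Λ.2 i > a (i+1)
            intro i
            rw [oRel_ent_iff]
            intro h1 h2
            rw [show Λ.2.card = Z'.2.card from hcard2, hZ'c2] at h1
            rw [hZc1] at h2
            rw [hgd2 i (by rw [hZ'c2]; omega)]
            split_ifs with hji
            · subst hji; exact hAc
            · exact hda i (by omega)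
          · -- b i ≥ gD Λ.1 (i+1)
            intro i
            rw [oRel_ent_iff]
            intro h1 h2
            rw [hZc2] at h1
            rw [show Λ.1.card = Z'.1.card from hcard1, hZ'c1] at h2
            rw [hgd1 (i+1) (by rw [hZ'c1]; omega)]
            split_ifs with hji
            · have hij : i = j := by omega
              subst hij
              exact hle
            · exact hbc i h1
          · -- gD Λ.1 i > b i
            intro i
            rw [oRel_ent_iff]
            intro h1 h2
            rw [show Λ.1.card = Z'.1.card from hcard1, hZ'c1] at h1
            rw [hZc2] at h2
            rw [hgd1 i (by rw [hZ'c1]; omega)]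
            split_ifs with hji
            · subst hji
              have q1 := hdc j (by omega)
              have q2 := hcb (j+1) (by omega)
              omega
            · exact hcb i h2
        have hΛZ' : Λ = Z' := by
          have h0 : Λ ∈ {Λ' | DRel Z Z' m (m+1) Z Λ'} := hDR
          rw [hset] at h0; exact h0
        have hymem : gD Z'.2 j ∈ Λ.1 := Finset.mem_insert_self _ _
        rw [hΛZ'] at hymem
        exact Finset.disjoint_left.mp hreg hymem (gD_mem (by rw [hZ'c2]; omega))
    intro i
    constructor
    · rw [oRel_ent_iff]
      intro h1 h2
      exact (key i).1 (by rw [hZ'c1] at h1; omega)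
    · rw [oRel_ent_iff]
      intro h1 h2
      exact (key i).2 (by rw [hZc2] at h2; omega)
  · -- Part (ii): m'' = m'
    intro hm2 hreg hset
    subst hm2
    have haB : ∀ i, i < m' → gD Z.1 i > gD Z.2 i := by
      intro i h
      have h1 := oRel_ent_iff.mp (hZ12 i) (by rw [hZc1]; omega) (by rw [hZc2]; omega)
      have h2 : gD Z.1 i ≠ gD Z.2 i := by
        intro he
        have ht := gD_mem (s := Z.2) (i := i) (by rw [hZc2]; omega)
        rw [← he] at ht
        exact Finset.disjoint_left.mp hreg (gD_mem (by rw [hZc1]; omega)) ht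
      omega
    have hbA : ∀ i, i + 1 < m' + 1 → gD Z.2 i > gD Z.1 (i+1) := by
      intro i h
      have h1 := oRel_ent_iff.mp (hZ21 i) (by rw [hZc2]; omega) (by rw [hZc1]; omega)
      have h2 : gD Z.2 i ≠ gD Z.1 (i+1) := by
        intro he
        have ht := gD_mem (s := Z.1) (i := i+1) (by rw [hZc1]; omega)
        rw [← he] at ht
        exact Finset.disjoint_left.mp hreg ht (gD_mem (by rw [hZc2]; omega))
      omega
    have hmem : DRel Z Z' m' m' Z Z' := by
      have h0 : Z ∈ ({Z} : Set Symb) := rfl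
      rw [← hset] at h0; exact h0
    obtain ⟨⟨-, -, hor⟩, -, -, -, -⟩ := hmem
    have hB : Bm Z Z' := by
      rcases hor with ⟨-, h⟩ | ⟨he, -⟩
      · exact h
      · omega
    obtain ⟨-, -, hb1, hb2, hb3, hb4⟩ := hB
    have had : ∀ i, i < m' → gD Z.1 i > gD Z'.2 i := fun i h =>
      oRel_ent_iff.mp (hb1 i) (by rw [hZc1]; omega) (by rw [hZ'c2]; omega)
    have hda : ∀ i, i + 1 < m' + 1 → gD Z'.2 i ≥ gD Z.1 (i+1) := fun i h =>
      oRel_ent_iff.mp (hb2 i) (by rw [hZ'c2]; omega) (by rw [hZc1]; omega)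
    have hbc : ∀ i, i + 1 < m' → gD Z.2 i > gD Z'.1 (i+1) := fun i h =>
      oRel_ent_iff.mp (hb3 i) (by rw [hZc2]; omega) (by rw [hZ'c1]; omega)
    have hcb : ∀ i, i < m' → gD Z'.1 i ≥ gD Z.2 i := fun i h =>
      oRel_ent_iff.mp (hb4 i) (by rw [hZ'c1]; omega) (by rw [hZc2]; omega)
    have key : ∀ j, (j < m' → gD Z.1 j > gD Z'.1 j) ∧ (j < m' → gD Z.2 j > gD Z'.2 j) := by
      by_contra hcon
      obtain ⟨j0, hj0⟩ := not_forall.mp hcon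
      classical
      have hP0 : (2*j0 % 2 = 0 ∧ 2*j0/2 < m' ∧ gD Z.1 (2*j0/2) ≤ gD Z'.1 (2*j0/2)) ∨
          (2*j0 % 2 = 1 ∧ 2*j0/2 < m' ∧ gD Z.2 (2*j0/2) ≤ gD Z'.2 (2*j0/2)) ∨
          ((2*j0+1) % 2 = 0 ∧ (2*j0+1)/2 < m' ∧ gD Z.1 ((2*j0+1)/2) ≤ gD Z'.1 ((2*j0+1)/2)) ∨
          ((2*j0+1) % 2 = 1 ∧ (2*j0+1)/2 < m' ∧ gD Z.2 ((2*j0+1)/2) ≤ gD Z'.2 ((2*j0+1)/2)) := by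
        rw [not_and_or] at hj0
        have e1 : 2*j0/2 = j0 := by omega
        have e2 : (2*j0+1)/2 = j0 := by omega
        rcases hj0 with h | h
        · push_neg at h
          exact Or.inl ⟨by omega, by rw [e1]; exact h.1, by rw [e1]; exact h.2⟩
        · push_neg at h
          exact Or.inr (Or.inr (Or.inr ⟨by omega, by rw [e2]; exact h.1, by rw [e2]; exact h.2⟩))
      have hex : ∃ n, n ≤ 2*m'+1 ∧
          ((n % 2 = 0 ∧ n/2 < m' ∧ gD Z.1 (n/2) ≤ gD Z'.1 (n/2)) ∨
           (n % 2 = 1 ∧ n/2 < m' ∧ gD Z.2 (n/2) ≤ gD Z'.2 (n/2))) ∧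
          ∀ k, k ≤ 2*m'+1 →
            ((k % 2 = 0 ∧ k/2 < m' ∧ gD Z.1 (k/2) ≤ gD Z'.1 (k/2)) ∨
             (k % 2 = 1 ∧ k/2 < m' ∧ gD Z.2 (k/2) ≤ gD Z'.2 (k/2))) → k ≤ n := by
        set Q : ℕ → Prop := fun n =>
          (n % 2 = 0 ∧ n/2 < m' ∧ gD Z.1 (n/2) ≤ gD Z'.1 (n/2)) ∨
          (n % 2 = 1 ∧ n/2 < m' ∧ gD Z.2 (n/2) ≤ gD Z'.2 (n/2)) with hQ
        have hwit : ∃ n0, n0 ≤ 2*m'+1 ∧ Q n0 := by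
          rcases hP0 with h | h | h | h
          · exact ⟨2*j0, by have := h.2.1; omega, Or.inl h⟩
          · exact ⟨2*j0, by have := h.2.1; omega, Or.inr h⟩
          · exact ⟨2*j0+1, by have := h.2.1; omega, Or.inl h⟩
          · exact ⟨2*j0+1, by have := h.2.1; omega, Or.inr h⟩
        obtain ⟨n0, hn0, hQn0⟩ := hwit
        refine ⟨Nat.findGreatest Q (2*m'+1), Nat.findGreatest_le _,
          Nat.findGreatest_spec hn0 hQn0, fun k hk hQk => ?_⟩
        by_contra hlt
        exact Nat.findGreatest_is_greatest
          (show Nat.findGreatest Q (2*m'+1) < k by omega) hk hQk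
      obtain ⟨n, hnlt, hPn, hmax⟩ := hex
      rcases hPn with ⟨hpar, hjlt, hle⟩ | ⟨hpar, hjlt, hle⟩
      · -- Case A : a j ≤ c j with j := n/2
        set j := n / 2 with hjdef
        have hjn : n = 2*j := by omega
        have hnotB : gD Z'.2 j < gD Z.2 j := by
          by_contra hge
          push_neg at hge
          have e : (2*j+1)/2 = j := by omega
          have := hmax (2*j+1) (by omega)
            (Or.inr ⟨by omega, by rw [e]; exact hjlt, by rw [e]; exact hge⟩)
          omega
        obtain ⟨hcard1, hgd1⟩ := gD_swap (s := Z.1) (j := j) (y := gD Z.2 j)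
          (by rw [hZc1]; omega)
          (fun hmem => Finset.disjoint_left.mp hreg hmem (gD_mem (by rw [hZc2]; omega)))
          (by intro h; rw [hZc1] at h; exact hbA j h)
          (by intro h
              have e : j - 1 + 1 = j := by omega
              have q1 := haB (j-1) (by omega)
              have q2 := hbA (j-1) (by omega)
              rw [e] at q2
              have q3 := haB j hjlt
              omega)
        obtain ⟨hcard2, hgd2⟩ := gD_swap (s := Z.2) (j := j) (y := gD Z.1 j)
          (by rw [hZc2]; omega)
          (fun hmem => Finset.disjoint_left.mp hreg (gD_mem (by rw [hZc1]; omega)) hmem)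
          (by intro h; rw [hZc2] at h
              have q1 := haB j hjlt
              have q2 := hbA j (by omega)
              have q3 := haB (j+1) (by omega)
              omega)
          (by intro h
              have e : j - 1 + 1 = j := by omega
              have q2 := hbA (j-1) (by omega)
              rw [e] at q2
              exact q2)
        set Λ : Symb := (insert (gD Z.2 j) (Z.1.erase (gD Z.1 j)),
                         insert (gD Z.1 j) (Z.2.erase (gD Z.2 j))) with hΛdef
        have hDR : DRel Z Z' m' m' Λ Z' := by
          refine ⟨⟨swap_mem_Sbar (gD_mem (by rw [hZc1]; omega))
              (fun hc => Finset.disjoint_left.mp hreg (gD_mem (by rw [hZc1]; omega)) hc)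
              (gD_mem (by rw [hZc2]; omega))
              (fun hc => Finset.disjoint_left.mp hreg hc (gD_mem (by rw [hZc2]; omega))),
            self_mem_Sbar Z', Or.inl ⟨rfl, ?_, ?_, ?_, ?_, ?_, ?_⟩⟩,
            by rw [show Λ.1.card = Z.1.card from hcard1, hZc1],
            by rw [show Λ.2.card = Z.2.card from hcard2, hZc2], hZ'c1, hZ'c2⟩
          · rw [hZ'c1, show Λ.2.card = Z.2.card from hcard2, hZc2]
          · rw [hZ'c2, show Λ.1.card = Z.1.card from hcard1, hZc1]
          · -- gD Λ.1 i > d i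
            intro i
            rw [oRel_ent_iff]
            intro h1 h2
            rw [show Λ.1.card = Z.1.card from hcard1, hZc1] at h1
            rw [hZ'c2] at h2
            rw [hgd1 i (by rw [hZc1]; omega)]
            split_ifs with hji
            · subst hji
              have q1 := had j hjlt
              omega
            · exact had i h2
          · -- d i ≥ gD Λ.1 (i+1)
            intro i
            rw [oRel_ent_iff]
            intro h1 h2
            rw [hZ'c2] at h1
            rw [show Λ.1.card = Z.1.card from hcard1, hZc1] at h2
            rw [hgd1 (i+1) (by rw [hZc1]; omega)]
            split_ifs with hji
            · have hij : i = j - 1 := by omega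
              have e : j - 1 + 1 = j := by omega
              subst hij
              have q1 := hda (j-1) (by omega)
              rw [e] at q1
              have q2 := haB j hjlt
              omega
            · exact hda i h2
          · -- gD Λ.2 i > c (i+1)
            intro i
            rw [oRel_ent_iff]
            intro h1 h2
            rw [show Λ.2.card = Z.2.card from hcard2, hZc2] at h1
            rw [hZ'c1] at h2
            rw [hgd2 i (by rw [hZc2]; omega)]
            split_ifs with hji
            · subst hji
              have q1 := haB j hjlt
              have q2 := hbc j (by omega)
              omega
            · exact hbc i (by omega)
          · -- c i ≥ gD Λ.2 i
            intro i
            rw [oRel_ent_iff]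
            intro h1 h2
            rw [hZ'c1] at h1
            rw [show Λ.2.card = Z.2.card from hcard2, hZc2] at h2
            rw [hgd2 i (by rw [hZc2]; omega)]
            split_ifs with hji
            · subst hji; exact hle
            · exact hcb i h2
        have hΛZ : Λ = Z := by
          have h0 : Λ ∈ {Λ0 | DRel Z Z' m' m' Λ0 Z'} := hDR
          rw [hset] at h0; exact h0
        have hymem : gD Z.2 j ∈ Λ.1 := Finset.mem_insert_self _ _
        rw [hΛZ] at hymem
        exact Finset.disjoint_left.mp hreg hymem (gD_mem (by rw [hZc2]; omega))
      · -- Case B : b j ≤ d j with j := n/2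
        set j := n / 2 with hjdef
        have hjn : n = 2*j+1 := by omega
        have hAc : j + 1 < m' → gD Z'.1 (j+1) < gD Z.1 (j+1) := by
          intro hj1m
          by_contra hge
          push_neg at hge
          have e : (2*(j+1))/2 = j+1 := by omega
          have := hmax (2*(j+1)) (by omega)
            (Or.inl ⟨by omega, by rw [e]; exact hj1m, by rw [e]; exact hge⟩)
          omega
        obtain ⟨hcard1, hgd1⟩ := gD_swap (s := Z.1) (j := j+1) (y := gD Z.2 j)
          (by rw [hZc1]; omega)
          (fun hmem => Finset.disjoint_left.mp hreg hmem (gD_mem (by rw [hZc2]; omega)))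
          (by intro h; rw [hZc1] at h
              have q1 := hbA j (by omega)
              have q2 := haB (j+1) (by omega)
              have q3 := hbA (j+1) (by omega)
              omega)
          (by intro h
              have e : j + 1 - 1 = j := by omega
              rw [e]
              exact haB j hjlt)
        obtain ⟨hcard2, hgd2⟩ := gD_swap (s := Z.2) (j := j) (y := gD Z.1 (j+1))
          (by rw [hZc2]; omega)
          (fun hmem => Finset.disjoint_left.mp hreg (gD_mem (by rw [hZc1]; omega)) hmem)
          (by intro h; rw [hZc2] at h; exact haB (j+1) h)
          (by intro h
              have e : j - 1 + 1 = j := by omega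
              have q1 := hbA (j-1) (by omega)
              rw [e] at q1
              have q2 := haB j hjlt
              have q3 := hbA j (by omega)
              omega)
        set Λ : Symb := (insert (gD Z.2 j) (Z.1.erase (gD Z.1 (j+1))),
                         insert (gD Z.1 (j+1)) (Z.2.erase (gD Z.2 j))) with hΛdef
        have hDR : DRel Z Z' m' m' Λ Z' := by
          refine ⟨⟨swap_mem_Sbar (gD_mem (by rw [hZc1]; omega))
              (fun hc => Finset.disjoint_left.mp hreg (gD_mem (by rw [hZc1]; omega)) hc)
              (gD_mem (by rw [hZc2]; omega))
              (fun hc => Finset.disjoint_left.mp hreg hc (gD_mem (by rw [hZc2]; omega))),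
            self_mem_Sbar Z', Or.inl ⟨rfl, ?_, ?_, ?_, ?_, ?_, ?_⟩⟩,
            by rw [show Λ.1.card = Z.1.card from hcard1, hZc1],
            by rw [show Λ.2.card = Z.2.card from hcard2, hZc2], hZ'c1, hZ'c2⟩
          · rw [hZ'c1, show Λ.2.card = Z.2.card from hcard2, hZc2]
          · rw [hZ'c2, show Λ.1.card = Z.1.card from hcard1, hZc1]
          · -- gD Λ.1 i > d i
            intro i
            rw [oRel_ent_iff]
            intro h1 h2
            rw [show Λ.1.card = Z.1.card from hcard1, hZc1] at h1
            rw [hZ'c2] at h2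
            rw [hgd1 i (by rw [hZc1]; omega)]
            split_ifs with hji
            · subst hji
              have q1 := hbA j (by omega)
              have q2 := had (j+1) h2
              omega
            · exact had i h2
          · -- d i ≥ gD Λ.1 (i+1)
            intro i
            rw [oRel_ent_iff]
            intro h1 h2
            rw [hZ'c2] at h1
            rw [show Λ.1.card = Z.1.card from hcard1, hZc1] at h2
            rw [hgd1 (i+1) (by rw [hZc1]; omega)]
            split_ifs with hji
            · have hij : i = j := by omega
              subst hij
              exact hle
            · exact hda i h2
          · -- gD Λ.2 i > c (i+1)
            intro i
            rw [oRel_ent_iff]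
            intro h1 h2
            rw [show Λ.2.card = Z.2.card from hcard2, hZc2] at h1
            rw [hZ'c1] at h2
            rw [hgd2 i (by rw [hZc2]; omega)]
            split_ifs with hji
            · subst hji
              exact hAc (by omega)
            · exact hbc i (by omega)
          · -- c i ≥ gD Λ.2 i
            intro i
            rw [oRel_ent_iff]
            intro h1 h2
            rw [hZ'c1] at h1
            rw [show Λ.2.card = Z.2.card from hcard2, hZc2] at h2
            rw [hgd2 i (by rw [hZc2]; omega)]
            split_ifs with hji
            · subst hji
              have q1 := hcb j hjlt
              have q2 := hbA j (by omega)
              omega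
            · exact hcb i h1
        have hΛZ : Λ = Z := by
          have h0 : Λ ∈ {Λ0 | DRel Z Z' m' m' Λ0 Z'} := hDR
          rw [hset] at h0; exact h0
        have hymem : gD Z.1 (j+1) ∈ Λ.2 := Finset.mem_insert_self _ _
        rw [hΛZ] at hymem
        exact Finset.disjoint_left.mp hreg (gD_mem (by rw [hZc1]; omega)) hymem
    intro i
    constructor
    · rw [oRel_ent_iff]
      intro h1 h2
      exact (key i).1 (by rw [hZ'c1] at h2; omega)
    · rw [oRel_ent_iff]
      intro h1 h2
      exact (key i).2 (by rw [hZ'c2] at h2; omega)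
end
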